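/- arXiv:2008.03524 — 5 statements merged into one kernel-verified Lean document; each statement's English description precedes it below -/
import Mathlib

section
/- For every nonnegative integer n and complex t with |t| < 1, t ∉ {0}, the following reduction formula holds: ₂F₁(1/2 + n, 1 + n; 2 + n; t) = (2(-1)^n (n+1)! / ((1/2)_n · t^{n+1})) · [1 - √(1-t) · ∑_{k=0}^{n} ((-1/2)_k / k!) (t/(t-1))^k]. -/
open scoped BigOperators
open Filter Complex Topology

/-- Pochhammer symbol `(a)_k` on `ℂ`. -/
noncomputable def pochC (a : ℂ) (k : ℕ) : ℂ := ∏ i ∈ Finset.range k, (a + i)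

/-- Gauss hypergeometric series `₂F₁(a,b;c;z)`. -/
noncomputable def hyp2F1 (a b c z : ℂ) : ℂ :=
  ∑' k : ℕ, pochC a k * pochC b k / (pochC c k * (k.factorial : ℂ)) * z ^ k

namespace Red

noncomputable def aa (n k : ℕ) : ℂ :=
  pochC (1/2 + n) k * pochC (1 + n) k / (pochC (2 + n) k * (k.factorial : ℂ))

noncomputable def dd (k : ℕ) : ℂ := pochC (-1/2) k / (k.factorial : ℂ)

noncomputable def TT (k : ℕ) (t : ℂ) : ℂ := (1 - t) ^ ((1:ℂ)/2 - k)

noncomputable def WW (n : ℕ) (t : ℂ) : ℂ :=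
  ∑ k ∈ Finset.range (n+1), dd k * (-1)^k * t^k * TT k t

noncomputable def cc (n : ℕ) : ℂ := (1/2 + n) * (1 + n) / (2 + n)

lemma pochC_zero (a : ℂ) : pochC a 0 = 1 := by simp [pochC]

lemma pochC_succ (a : ℂ) (k : ℕ) : pochC a (k+1) = pochC a k * (a + k) := by
  simp [pochC, Finset.prod_range_succ]

lemma pochC_succ_left (a : ℂ) (k : ℕ) : pochC a (k+1) = a * pochC (a+1) k := by
  rw [pochC, Finset.prod_range_succ', pochC]
  simp only [Nat.cast_zero, add_zero]
  rw [mul_comm]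
  congr 1
  refine Finset.prod_congr rfl fun i _ => by push_cast; ring
lemma pochC_ne_zero {a : ℂ} (ha : 0 < a.re) (k : ℕ) : pochC a k ≠ 0 := by
  rw [pochC, Finset.prod_ne_zero_iff]
  intro i _ h
  have := congrArg Complex.re h
  simp [Complex.add_re] at this
  have : (0:ℝ) ≤ (i:ℝ) := by positivity
  linarith [congrArg Complex.re h, Complex.zero_re]
lemma re_pos_of_lt_one {t : ℂ} (ht : ‖t‖ < 1) : 0 < (1 - t).re := by
  have h1 : |t.re| ≤ ‖t‖ := by exact Complex.abs_re_le_norm t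
  have := abs_le.mp h1
  simp only [Complex.sub_re, Complex.one_re]
  linarith
lemma one_sub_ne_zero {t : ℂ} (ht : ‖t‖ < 1) : (1 : ℂ) - t ≠ 0 := by
  intro h
  have := re_pos_of_lt_one ht
  rw [h] at this
  simp at this
lemma tendsto_ratio (c d : ℂ) :
    Tendsto (fun k : ℕ => (c + k) / (d + k)) atTop (𝓝 1) := by
  have h0 : Tendsto (fun k : ℕ => ‖(d:ℂ) + k‖) atTop atTop := by
    have h : Tendsto (fun k : ℕ => (k : ℝ) - ‖d‖) atTop atTop :=
      tendsto_atTop_add_const_right _ _ tendsto_natCast_atTop_atTop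
    apply tendsto_atTop_mono _ h
    intro k
    have h2 : ‖((d:ℂ) + k) - d‖ ≤ ‖(d:ℂ) + k‖ + ‖d‖ := norm_sub_le _ _
    simp only [add_sub_cancel_left, Complex.norm_natCast] at h2
    linarith
  have h1 : Tendsto (fun k : ℕ => ((d:ℂ) + k)⁻¹) atTop (𝓝 0) := by
    rw [tendsto_zero_iff_norm_tendsto_zero]
    simp only [norm_inv]; exact h0.inv_tendsto_atTop
  have h2 : Tendsto (fun k : ℕ => 1 + (c - d) * ((d:ℂ) + k)⁻¹) atTop (𝓝 1) := by
    simpa using (h1.const_mul (c - d)).const_add (1:ℂ)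
  refine h2.congr' ?_
  filter_upwards [h0.eventually_ge_atTop 1] with k hk
  have hne : (d:ℂ) + k ≠ 0 := by
    intro h; rw [h] at hk; simp at hk; linarith
  field_simp
  ring
lemma poch_half_ne (n k : ℕ) : pochC (1/2 + n) k ≠ 0 := by
  refine pochC_ne_zero ?_ k
  simp
  positivity

lemma poch_one_ne (n k : ℕ) : pochC (1 + n) k ≠ 0 := by
  refine pochC_ne_zero ?_ k
  simp
  positivity

lemma poch_two_ne (n k : ℕ) : pochC (2 + n) k ≠ 0 := by
  refine pochC_ne_zero ?_ k
  simp
  positivity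

lemma fact_ne (k : ℕ) : ((k.factorial : ℂ)) ≠ 0 :=
  Nat.cast_ne_zero.mpr k.factorial_ne_zero

lemma two_add_ne (n k : ℕ) : ((2:ℂ) + n + k) ≠ 0 := by
  intro h
  have := congrArg Complex.re h
  simp at this
  have h1 : (0:ℝ) ≤ n := n.cast_nonneg
  have h2 : (0:ℝ) ≤ k := k.cast_nonneg
  linarith

lemma nat_add_one_ne (k : ℕ) : ((k:ℂ) + 1) ≠ 0 := by
  intro h
  have := congrArg Complex.re h
  simp at this
  have h2 : (0:ℝ) ≤ k := k.cast_nonneg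
  linarith

lemma aa_succ (n k : ℕ) :
    aa n (k+1) = aa n k * ((1/2 + n + k) * (1 + n + k) / ((2 + n + k) * (k+1))) := by
  unfold aa
  rw [pochC_succ, pochC_succ, pochC_succ, Nat.factorial_succ]
  rw [div_mul_div_comm]
  push_cast
  congr 1
  · ring
  · ring

lemma aa_ne_zero (n k : ℕ) : aa n k ≠ 0 := by
  unfold aa
  exact div_ne_zero (mul_ne_zero (poch_half_ne n k) (poch_one_ne n k))
    (mul_ne_zero (poch_two_ne n k) (fact_ne k))

lemma summable_norm_aa (n : ℕ) {x : ℝ} (hx0 : 0 < x) (hx1 : x < 1) :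
    Summable (fun k => ‖aa n k‖ * ((k:ℝ)+1) * x ^ k) := by
  have hq : Tendsto (fun k : ℕ =>
      (((1:ℂ)/2 + n + k) * (1 + n + k) / ((2 + n + k) * (k+1)))) atTop (𝓝 1) := by
    have h := (tendsto_ratio (1/2 + n) (2 + n)).mul (tendsto_ratio (1 + n) 1)
    rw [one_mul] at h
    refine Tendsto.congr (fun k => ?_) h
    rw [div_mul_div_comm]
    ring_nf
  have h2 : Tendsto (fun k : ℕ => (1 + 1/((k:ℝ)+1))) atTop (𝓝 1) := by
    have := tendsto_one_div_add_atTop_nhds_zero_nat.const_add (1:ℝ)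
    simpa using this
  have h3 : Tendsto (fun k : ℕ =>
      ‖(((1:ℂ)/2 + n + k) * (1 + n + k) / ((2 + n + k) * (k+1)))‖
        * (1 + 1/((k:ℝ)+1)) * x) atTop (𝓝 x) := by
    have := (hq.norm.mul h2).mul_const x
    simpa using this
  apply summable_of_ratio_test_tendsto_lt_one hx1
  · filter_upwards with k
    have := aa_ne_zero n k
    have h4 : 0 < ‖aa n k‖ := norm_pos_iff.mpr this
    positivity
  · refine Tendsto.congr (fun k => ?_) h3
    have h5 : 0 < ‖aa n k‖ := norm_pos_iff.mpr (aa_ne_zero n k)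
    rw [Real.norm_of_nonneg (by positivity), Real.norm_of_nonneg (by positivity)]
    rw [aa_succ, norm_mul]
    set Q := ‖(((1:ℂ)/2 + n + k) * (1 + n + k) / ((2 + n + k) * (k+1)))‖ with hQ
    set A := ‖aa n k‖ with hA
    have hxk : (0:ℝ) < x ^ k := pow_pos hx0 k
    have hk1 : (0:ℝ) < (k:ℝ) + 1 := by positivity
    have hA0 : (0:ℝ) < A := h5
    push_cast
    rw [pow_succ]
    field_simp

lemma summable_aa (n : ℕ) {t : ℂ} (ht : ‖t‖ < 1) :
    Summable (fun k => aa n k * t ^ k) := by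
  have hx0 : 0 < (‖t‖ + 1)/2 := by positivity
  have hx1 : (‖t‖ + 1)/2 < 1 := by linarith
  have htx : ‖t‖ ≤ (‖t‖ + 1)/2 := by linarith [norm_nonneg t]
  refine Summable.of_norm (Summable.of_nonneg_of_le (fun k => norm_nonneg _)
    (fun k => ?_) (summable_norm_aa n hx0 hx1))
  rw [norm_mul, norm_pow]
  have h1 : ‖t‖ ^ k ≤ ((‖t‖ + 1)/2) ^ k := pow_le_pow_left₀ (norm_nonneg t) htx k
  have h2 : (0:ℝ) ≤ ‖aa n k‖ := norm_nonneg _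
  have h3 : (1:ℝ) ≤ (k:ℝ) + 1 := by
    have := Nat.cast_nonneg (α := ℝ) k
    linarith
  have h4 : (0:ℝ) ≤ ((‖t‖ + 1)/2) ^ k := by positivity
  calc ‖aa n k‖ * ‖t‖ ^ k ≤ ‖aa n k‖ * ((‖t‖ + 1)/2) ^ k :=
        mul_le_mul_of_nonneg_left h1 h2
    _ ≤ ‖aa n k‖ * ((k:ℝ)+1) * ((‖t‖ + 1)/2) ^ k := by
        nlinarith [mul_nonneg h2 h4, Nat.cast_nonneg (α := ℝ) k,
          mul_nonneg (mul_nonneg h2 h4) (Nat.cast_nonneg (α := ℝ) k)]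

lemma hyp_eq (n : ℕ) (t : ℂ) :
    hyp2F1 (1/2 + n) (1 + n) (2 + n) t = ∑' k, aa n k * t ^ k := rfl

lemma two_add_ne' (n : ℕ) : ((2:ℂ) + n) ≠ 0 := by simpa using two_add_ne n 0

lemma aa_shift (n k : ℕ) : aa (n+1) k =
    pochC ((1/2 + n) + 1) k * pochC ((1 + n) + 1) k / (pochC ((2 + n) + 1) k * (k.factorial : ℂ)) := by
  unfold aa
  push_cast
  ring_nf

lemma deriv_coeff (n k : ℕ) : ((k:ℂ)+1) * aa n (k+1) = cc n * aa (n+1) k := by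
  rw [aa_shift]
  unfold aa cc
  rw [pochC_succ_left, pochC_succ_left, pochC_succ_left, Nat.factorial_succ, Nat.cast_mul]
  have hf := fact_ne k
  have h2n : ((2:ℂ) + n) ≠ 0 := two_add_ne' n
  have hk1 : ((k:ℂ) + 1) ≠ 0 := nat_add_one_ne k
  have hk1' : ((k+1:ℕ):ℂ) ≠ 0 := by push_cast; exact hk1
  generalize hP3 : pochC ((2 + (n:ℂ)) + 1) k = P3
  have hp : P3 ≠ 0 := by
    rw [← hP3]
    have := poch_two_ne (n+1) k
    push_cast at this
    convert this using 2
    ring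
  generalize pochC ((1/2 + (n:ℂ)) + 1) k = P1
  generalize pochC ((1 + (n:ℂ)) + 1) k = P2
  field_simp
  push_cast
  ring

lemma shift_eq (n : ℕ) (t : ℂ) (k : ℕ) :
    aa n (k+1) * (((k+1:ℕ):ℂ) * t ^ (k+1-1)) = cc n * (aa (n+1) k * t ^ k) := by
  rw [Nat.add_sub_cancel]
  have := deriv_coeff n k
  push_cast
  calc aa n (k+1) * (((k:ℂ)+1) * t ^ k) = (((k:ℂ)+1) * aa n (k+1)) * t ^ k := by ring
    _ = (cc n * aa (n+1) k) * t ^ k := by rw [this]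
    _ = cc n * (aa (n+1) k * t ^ k) := by ring

set_option maxHeartbeats 1000000 in
lemma hasDerivAt_hyp (n : ℕ) {t : ℂ} (ht : ‖t‖ < 1) :
    HasDerivAt (fun z => ∑' k, aa n k * z ^ k) (cc n * ∑' k, aa (n+1) k * t ^ k) t := by
  set r : ℝ := (‖t‖ + 1)/2 with hr
  have hx0 : 0 < r := by positivity
  have hx1 : r < 1 := by rw [hr]; linarith
  have htr : ‖t‖ < r := by rw [hr]; linarith
  have hmem : t ∈ Metric.ball (0:ℂ) r := by
    simpa [Metric.mem_ball, dist_eq_norm] using htr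
  have hsum_shift : Summable (fun k => aa n (k+1) * (((k+1:ℕ):ℂ) * t ^ (k+1-1))) := by
    refine Summable.congr (((summable_aa (n+1) ht).mul_left (cc n))) fun k => ?_
    rw [shift_eq]
  have hsumf : Summable (fun k => aa n k * ((k:ℂ) * t ^ (k-1))) :=
    (summable_nat_add_iff 1).mp hsum_shift
  have hder : HasDerivAt (fun z => ∑' k, aa n k * z ^ k)
      (∑' k, aa n k * ((k:ℂ) * t ^ (k-1))) t := by
    refine hasDerivAt_tsum_of_isPreconnected
      (g := fun k z => aa n k * z ^ k)
      (g' := fun k y => aa n k * ((k:ℂ) * y ^ (k-1)))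
      (u := fun k => ‖aa n k‖ * ((k:ℝ)+1) * r ^ k / r)
      ((summable_norm_aa n hx0 hx1).div_const r) Metric.isOpen_ball
      ((convex_ball (0:ℂ) r).isPreconnected) (fun k y _ => ?_) (fun k y hy => ?_)
      hmem (summable_aa n ht) hmem
    · exact (hasDerivAt_pow k y).const_mul (aa n k)
    · have hy' : ‖y‖ ≤ r := by
        simp only [Metric.mem_ball, dist_eq_norm, sub_zero] at hy
        exact hy.le
      rw [norm_mul, norm_mul, norm_pow, Complex.norm_natCast]
      rcases Nat.eq_zero_or_pos k with hk | hk
      · subst hk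
        simp
        positivity
      · have h1 : ‖y‖ ^ (k-1) ≤ r ^ (k-1) := pow_le_pow_left₀ (norm_nonneg y) hy' _
        have h2 : r ^ (k-1) = r ^ k / r := by
          rw [eq_div_iff hx0.ne', ← pow_succ, Nat.sub_add_cancel hk]
        have h3 : (k:ℝ) ≤ (k:ℝ) + 1 := by linarith
        have h4 : (0:ℝ) ≤ ‖aa n k‖ := norm_nonneg _
        have h5 : (0:ℝ) ≤ (k:ℝ) := Nat.cast_nonneg k
        calc ‖aa n k‖ * ((k:ℝ) * ‖y‖ ^ (k-1))
            ≤ ‖aa n k‖ * ((k:ℝ) * r ^ (k-1)) := by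
              apply mul_le_mul_of_nonneg_left _ h4
              exact mul_le_mul_of_nonneg_left h1 h5
          _ = ‖aa n k‖ * (k:ℝ) * r ^ k / r := by rw [h2]; ring
          _ ≤ ‖aa n k‖ * ((k:ℝ)+1) * r ^ k / r := by
              have h6 : (0:ℝ) ≤ r ^ k := by positivity
              gcongr
  convert hder using 1
  rw [Summable.tsum_eq_zero_add hsumf]
  simp only [Nat.cast_zero, zero_mul, mul_zero, zero_add]
  rw [tsum_congr (shift_eq n t), tsum_mul_left]

lemma dd_succ (k : ℕ) : ((k:ℂ)+1) * dd (k+1) = dd k * (-(1/2) + k) := by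
  unfold dd
  rw [pochC_succ, Nat.factorial_succ, Nat.cast_mul]
  have hf := fact_ne k
  have hk1 : ((k:ℂ) + 1) ≠ 0 := nat_add_one_ne k
  have hk1' : ((k+1:ℕ):ℂ) ≠ 0 := by push_cast; exact hk1
  push_cast
  field_simp

lemma hasDerivAt_TT (k : ℕ) {t : ℂ} (ht : ‖t‖ < 1) :
    HasDerivAt (TT k) (-(((1:ℂ)/2 - k) * TT (k+1) t)) t := by
  have h0 : ((1:ℂ) - t) ∈ Complex.slitPlane :=
    Complex.mem_slitPlane_iff.mpr (Or.inl (re_pos_of_lt_one ht))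
  have h1 : HasDerivAt (fun z : ℂ => 1 - z) (-1) t := by
    simpa using (hasDerivAt_id t).const_sub (1:ℂ)
  have h2 := h1.cpow_const (c := (1:ℂ)/2 - k) h0
  unfold TT
  convert h2 using 1
  rw [show ((1:ℂ)/2 - ((k+1:ℕ):ℂ)) = ((1:ℂ)/2 - (k:ℂ)) - 1 by push_cast; ring]
  ring

lemma hasDerivAt_summand (k : ℕ) {t : ℂ} (ht : ‖t‖ < 1) :
    HasDerivAt (fun z => dd k * (-1)^k * z^k * TT k z)
      (dd k * (-1)^k * ((k:ℂ) * t^(k-1) * TT k t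
        + t^k * (-(((1:ℂ)/2 - k) * TT (k+1) t)))) t := by
  have h1 := (hasDerivAt_pow k t).mul (hasDerivAt_TT k ht)
  have h2 := h1.const_mul (dd k * (-1)^k)
  have hfun : (fun z => dd k * (-1)^k * z^k * TT k z)
      = fun z => dd k * (-1)^k * (z^k * TT k z) := by
    funext z; ring
  rw [hfun]
  exact h2

lemma hasDerivAt_WW (n : ℕ) {t : ℂ} (ht : ‖t‖ < 1) :
    HasDerivAt (WW n) (((n:ℂ)+1) * dd (n+1) * (-1)^n * t^n * TT (n+1) t) t := by
  induction n with
  | zero =>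
    have hfun : WW 0 = fun z => dd 0 * (-1)^0 * z^0 * TT 0 z := by
      funext z; simp [WW]
    rw [hfun]
    have hd0 : dd 0 = 1 := by simp [dd, pochC]
    have hd1 : dd 1 = -(1/2) := by
      simp [dd, pochC, Finset.prod_range_one]
      norm_num
    convert hasDerivAt_summand 0 ht using 1
    rw [hd0, hd1]
    norm_num
  | succ n ih =>
    have hfun : WW (n+1) = fun z => WW n z + dd (n+1) * (-1)^(n+1) * z^(n+1) * TT (n+1) z := by
      funext z; simp [WW, Finset.sum_range_succ]
    rw [hfun]
    have h := ih.add (hasDerivAt_summand (n+1) ht)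
    refine h.congr_deriv ?_
    have hd := dd_succ (n+1)
    push_cast at hd ⊢
    linear_combination (-(((-1:ℂ))^(n+1) * t^(n+1) * TT (n+1+1) t)) * hd

lemma pochC_one_eq (k : ℕ) : pochC 1 k = (k.factorial : ℂ) := by
  induction k with
  | zero => simp [pochC]
  | succ k ih =>
    rw [pochC_succ, ih, Nat.factorial_succ, Nat.cast_mul]
    push_cast
    ring

lemma pochC_two_eq (k : ℕ) : pochC 2 k = ((k+1).factorial : ℂ) := by
  induction k with
  | zero => simp [pochC]
  | succ k ih =>
    rw [pochC_succ, ih, Nat.factorial_succ (k+1), Nat.cast_mul]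
    push_cast
    ring

lemma aa_zero_eq (k : ℕ) : aa 0 k = pochC (1/2) k / (((k+1).factorial : ℂ)) := by
  unfold aa
  rw [show ((1:ℂ)/2 + ((0:ℕ):ℂ)) = 1/2 by norm_num,
    show ((1:ℂ) + ((0:ℕ):ℂ)) = 1 by norm_num,
    show ((2:ℂ) + ((0:ℕ):ℂ)) = 2 by norm_num,
    pochC_one_eq, pochC_two_eq]
  have hf := fact_ne k
  have hf1 := fact_ne (k+1)
  field_simp

lemma dd_eq_aa0 (k : ℕ) : dd (k+1) = -(1/2) * aa 0 k := by
  rw [aa_zero_eq]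
  unfold dd
  rw [pochC_succ_left, show ((-1:ℂ)/2 + 1) = 1/2 by norm_num]
  have hf1 := fact_ne (k+1)
  field_simp

lemma summable_norm_dd {x : ℝ} (hx0 : 0 < x) (hx1 : x < 1) :
    Summable (fun k => ‖dd k‖ * ((k:ℝ)+1) * x ^ k) := by
  rw [← summable_nat_add_iff 1]
  refine Summable.of_nonneg_of_le (fun k => by positivity) (fun k => ?_)
    (summable_norm_aa 0 hx0 hx1)
  rw [dd_eq_aa0, norm_mul]
  have h1 : ‖(-(1/2) : ℂ)‖ = 1/2 := by
    rw [norm_neg]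
    simp
  have h2 : x ^ (k+1) ≤ x ^ k := pow_le_pow_of_le_one hx0.le hx1.le (Nat.le_succ k)
  have h4 : (0:ℝ) ≤ ‖aa 0 k‖ := norm_nonneg _
  have h5 : (0:ℝ) ≤ x ^ k := by positivity
  rw [h1]
  push_cast
  have key1 : ‖aa 0 k‖ * x^(k+1) ≤ ‖aa 0 k‖ * x^k := mul_le_mul_of_nonneg_left h2 h4
  have key2 : (0:ℝ) ≤ (k:ℝ) + 2 := by positivity
  nlinarith [mul_le_mul_of_nonneg_left key1 key2,
    mul_nonneg (Nat.cast_nonneg (α := ℝ) k) (mul_nonneg h4 h5)]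

lemma summable_dd {t : ℂ} (ht : ‖t‖ < 1) : Summable (fun k => dd k * t ^ k) := by
  have hx0 : 0 < (‖t‖ + 1)/2 := by positivity
  have hx1 : (‖t‖ + 1)/2 < 1 := by linarith
  have htx : ‖t‖ ≤ (‖t‖ + 1)/2 := by linarith [norm_nonneg t]
  refine Summable.of_norm (Summable.of_nonneg_of_le (fun k => norm_nonneg _)
    (fun k => ?_) (summable_norm_dd hx0 hx1))
  rw [norm_mul, norm_pow]
  have h1 : ‖t‖ ^ k ≤ ((‖t‖ + 1)/2) ^ k := pow_le_pow_left₀ (norm_nonneg t) htx k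
  have h2 : (0:ℝ) ≤ ‖dd k‖ := norm_nonneg _
  have h3 : (1:ℝ) ≤ (k:ℝ) + 1 := by
    have := Nat.cast_nonneg (α := ℝ) k
    linarith
  have h4 : (0:ℝ) ≤ ((‖t‖ + 1)/2) ^ k := by positivity
  calc ‖dd k‖ * ‖t‖ ^ k ≤ ‖dd k‖ * ((‖t‖ + 1)/2) ^ k :=
        mul_le_mul_of_nonneg_left h1 h2
    _ ≤ ‖dd k‖ * ((k:ℝ)+1) * ((‖t‖ + 1)/2) ^ k := by
        nlinarith [mul_nonneg h2 h4, Nat.cast_nonneg (α := ℝ) k,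
          mul_nonneg (mul_nonneg h2 h4) (Nat.cast_nonneg (α := ℝ) k)]

lemma summable_B {t : ℂ} (ht : ‖t‖ < 1) :
    Summable (fun k : ℕ => (k:ℂ) * dd k * t ^ k) := by
  have hx0 : 0 < (‖t‖ + 1)/2 := by positivity
  have hx1 : (‖t‖ + 1)/2 < 1 := by linarith
  have htx : ‖t‖ ≤ (‖t‖ + 1)/2 := by linarith [norm_nonneg t]
  refine Summable.of_norm (Summable.of_nonneg_of_le (fun k => norm_nonneg _)
    (fun k => ?_) (summable_norm_dd hx0 hx1))
  rw [norm_mul, norm_mul, norm_pow, Complex.norm_natCast]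
  have h1 : ‖t‖ ^ k ≤ ((‖t‖ + 1)/2) ^ k := pow_le_pow_left₀ (norm_nonneg t) htx k
  have h2 : (0:ℝ) ≤ ‖dd k‖ := norm_nonneg _
  have h4 : (0:ℝ) ≤ ((‖t‖ + 1)/2) ^ k := by positivity
  have h5 : (0:ℝ) ≤ (k:ℝ) := Nat.cast_nonneg k
  calc (k:ℝ) * ‖dd k‖ * ‖t‖ ^ k ≤ (k:ℝ) * ‖dd k‖ * ((‖t‖ + 1)/2) ^ k := by
        apply mul_le_mul_of_nonneg_left h1 (by positivity)
    _ ≤ ‖dd k‖ * ((k:ℝ)+1) * ((‖t‖ + 1)/2) ^ k := by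
        nlinarith [mul_nonneg h2 h4]

lemma shift_dd (t : ℂ) (k : ℕ) :
    dd (k+1) * (((k+1:ℕ):ℂ) * t ^ (k+1-1))
      = (k:ℂ) * dd k * t ^ k - (1/2) * (dd k * t ^ k) := by
  rw [Nat.add_sub_cancel]
  have hd := dd_succ k
  push_cast
  linear_combination t ^ k * hd

lemma summable_D {t : ℂ} (ht : ‖t‖ < 1) :
    Summable (fun k => dd k * ((k:ℂ) * t ^ (k-1))) := by
  rw [← summable_nat_add_iff 1]
  refine Summable.congr ((summable_B ht).sub ((summable_dd ht).mul_left (1/2))) fun k => ?_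
  rw [← shift_dd]

lemma hasDerivAt_G {t : ℂ} (ht : ‖t‖ < 1) :
    HasDerivAt (fun z => ∑' k, dd k * z ^ k) (∑' k, dd k * ((k:ℂ) * t ^ (k-1))) t := by
  set r : ℝ := (‖t‖ + 1)/2 with hr
  have hx0 : 0 < r := by positivity
  have hx1 : r < 1 := by rw [hr]; linarith
  have htr : ‖t‖ < r := by rw [hr]; linarith
  have hmem : t ∈ Metric.ball (0:ℂ) r := by
    simpa [Metric.mem_ball, dist_eq_norm] using htr
  refine hasDerivAt_tsum_of_isPreconnected
    (g := fun k z => dd k * z ^ k)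
    (g' := fun k y => dd k * ((k:ℂ) * y ^ (k-1)))
    (u := fun k => ‖dd k‖ * ((k:ℝ)+1) * r ^ k / r)
    ((summable_norm_dd hx0 hx1).div_const r) Metric.isOpen_ball
    ((convex_ball (0:ℂ) r).isPreconnected) (fun k y _ => ?_) (fun k y hy => ?_)
    hmem (summable_dd ht) hmem
  · exact (hasDerivAt_pow k y).const_mul (dd k)
  · have hy' : ‖y‖ ≤ r := by
      simp only [Metric.mem_ball, dist_eq_norm, sub_zero] at hy
      exact hy.le
    rw [norm_mul, norm_mul, norm_pow, Complex.norm_natCast]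
    rcases Nat.eq_zero_or_pos k with hk | hk
    · subst hk
      simp
      positivity
    · have h1 : ‖y‖ ^ (k-1) ≤ r ^ (k-1) := pow_le_pow_left₀ (norm_nonneg y) hy' _
      have h2 : r ^ (k-1) = r ^ k / r := by
        rw [eq_div_iff hx0.ne', ← pow_succ, Nat.sub_add_cancel hk]
      have h4 : (0:ℝ) ≤ ‖dd k‖ := norm_nonneg _
      have h5 : (0:ℝ) ≤ (k:ℝ) := Nat.cast_nonneg k
      calc ‖dd k‖ * ((k:ℝ) * ‖y‖ ^ (k-1))
          ≤ ‖dd k‖ * ((k:ℝ) * r ^ (k-1)) := by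
            apply mul_le_mul_of_nonneg_left _ h4
            exact mul_le_mul_of_nonneg_left h1 h5
        _ = ‖dd k‖ * (k:ℝ) * r ^ k / r := by rw [h2]; ring
        _ ≤ ‖dd k‖ * ((k:ℝ)+1) * r ^ k / r := by
            have h6 : (0:ℝ) ≤ r ^ k := by positivity
            gcongr
            linarith

lemma ode {t : ℂ} (ht : ‖t‖ < 1) :
    (∑' k, dd k * ((k:ℂ) * t ^ (k-1)))
      = t * (∑' k, dd k * ((k:ℂ) * t ^ (k-1))) - (1/2) * ∑' k, dd k * t ^ k := by
  have hB : (∑' k : ℕ, (k:ℂ) * dd k * t ^ k)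
      = t * ∑' k, dd k * ((k:ℂ) * t ^ (k-1)) := by
    rw [← tsum_mul_left]
    refine tsum_congr fun k => ?_
    cases k with
    | zero => simp
    | succ k =>
      rw [Nat.add_sub_cancel]
      push_cast
      ring
  conv_lhs => rw [Summable.tsum_eq_zero_add (summable_D ht)]
  simp only [Nat.cast_zero, zero_mul, mul_zero, zero_add]
  rw [tsum_congr (shift_dd t),
    Summable.tsum_sub (summable_B ht) ((summable_dd ht).mul_left (1/2)), tsum_mul_left, hB]

lemma G_eq {t : ℂ} (ht : ‖t‖ < 1) :
    (∑' k, dd k * t ^ k) = (1 - t) ^ ((1:ℂ)/2) := by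
  set h : ℂ → ℂ :=
    fun w => (∑' k, dd k * w ^ k) * Complex.exp (-(1/2) * Complex.log (1 - w)) with hh
  have hder : ∀ z ∈ Metric.ball (0:ℂ) 1, HasDerivAt h 0 z := by
    intro z hz
    have hz1 : ‖z‖ < 1 := by
      simpa [Metric.mem_ball, dist_eq_norm] using hz
    have hne : (1:ℂ) - z ≠ 0 := one_sub_ne_zero hz1
    have hslit : ((1:ℂ) - z) ∈ Complex.slitPlane :=
      Complex.mem_slitPlane_iff.mpr (Or.inl (re_pos_of_lt_one hz1))
    have hsub : HasDerivAt (fun w : ℂ => 1 - w) (-1) z := by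
      simpa using (hasDerivAt_id z).const_sub (1:ℂ)
    have hlog : HasDerivAt (fun w => Complex.log (1 - w)) ((-1) / (1 - z)) z :=
      hsub.clog hslit
    have hexp : HasDerivAt (fun w => Complex.exp (-(1/2) * Complex.log (1 - w)))
        (Complex.exp (-(1/2) * Complex.log (1 - z)) * (-(1/2) * ((-1) / (1 - z)))) z :=
      (hlog.const_mul (-(1/2))).cexp
    have hG := hasDerivAt_G hz1
    have hprod := hG.mul hexp
    refine hprod.congr_deriv ?_
    have hX2 : (∑' k, dd k * ((k:ℂ) * z ^ (k-1))) * (1 - z)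
        = -(1/2) * ∑' k, dd k * z ^ k := by
      linear_combination ode hz1
    have hinv : (1 - z) * (1 - z)⁻¹ = 1 := mul_inv_cancel₀ hne
    linear_combination
      (Complex.exp (-(1/2) * Complex.log (1 - z)) * (1 - z)⁻¹) * hX2
      - ((∑' (k : ℕ), dd k * ((k:ℂ) * z ^ (k - 1)))
          * Complex.exp (-(1/2) * Complex.log (1 - z))) * hinv
  have hdiff : DifferentiableOn ℂ h (Metric.ball (0:ℂ) 1) :=
    fun z hz => ((hder z hz).differentiableAt).differentiableWithinAt
  have hfd : ∀ z ∈ Metric.ball (0:ℂ) 1, fderivWithin ℂ h (Metric.ball (0:ℂ) 1) z = 0 := by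
    intro z hz
    have h1 := ((hder z hz).hasFDerivAt).fderiv
    rw [fderivWithin_of_mem_nhds (Metric.isOpen_ball.mem_nhds hz), h1]
    ext w
    simp
  have hmem : t ∈ Metric.ball (0:ℂ) 1 := by
    simpa [Metric.mem_ball, dist_eq_norm] using ht
  have hmem0 : (0:ℂ) ∈ Metric.ball (0:ℂ) 1 := by
    simp [Metric.mem_ball]
  have hconst : h t = h 0 :=
    (convex_ball (0:ℂ) 1).is_const_of_fderivWithin_eq_zero hdiff hfd hmem hmem0
  have h0val : h 0 = 1 := by
    rw [hh]
    simp only [sub_zero, Complex.log_one, mul_zero, Complex.exp_zero, mul_one]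
    rw [tsum_eq_single 0 (fun k hk => by simp [zero_pow hk])]
    simp [dd, pochC]
  rw [h0val] at hconst
  rw [Complex.cpow_def_of_ne_zero (one_sub_ne_zero ht)]
  have hmul : Complex.exp (-(1/2) * Complex.log (1 - t))
      * Complex.exp (Complex.log (1 - t) * (1/2)) = 1 := by
    rw [← Complex.exp_add, show -(1/2) * Complex.log (1 - t)
      + Complex.log (1 - t) * (1/2) = 0 by ring]
    exact Complex.exp_zero
  calc (∑' k, dd k * t ^ k)
      = (∑' k, dd k * t ^ k) * (Complex.exp (-(1/2) * Complex.log (1 - t))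
          * Complex.exp (Complex.log (1 - t) * (1/2))) := by rw [hmul, mul_one]
    _ = (h t) * Complex.exp (Complex.log (1 - t) * (1/2)) := by rw [hh]; ring
    _ = Complex.exp (Complex.log (1 - t) * (1/2)) := by rw [hconst, one_mul]

lemma base (t : ℂ) (ht : ‖t‖ < 1) :
    t * (∑' k, aa 0 k * t ^ k) = 2 - 2 * (1 - t) ^ ((1:ℂ)/2) := by
  have SC : Summable (fun k => dd k * t ^ k) := summable_dd ht
  have h1 : (∑' k, dd k * t ^ k)
      = 1 - t/2 * ∑' k, aa 0 k * t ^ k := by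
    rw [Summable.tsum_eq_zero_add SC]
    have h2 : ∀ k : ℕ, dd (k+1) * t ^ (k+1) = -(t/2) * (aa 0 k * t ^ k) := by
      intro k
      rw [dd_eq_aa0]
      ring
    rw [tsum_congr h2, tsum_mul_left]
    have hdd0 : dd 0 = 1 := by simp [dd, pochC]
    rw [hdd0]
    ring
  have h3 := G_eq ht
  rw [h1] at h3
  linear_combination (-2 : ℂ) * h3

lemma key (n : ℕ) : ∀ t : ℂ, ‖t‖ < 1 →
    pochC (1/2) n * t^(n+1) * (∑' k, aa n k * t ^ k)
      = 2 * (-1)^n * ((n+1).factorial : ℂ) * (1 - WW n t) := by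
  induction n with
  | zero =>
    intro t ht
    have hb := base t ht
    have hW0 : WW 0 t = (1 - t)^((1:ℂ)/2) := by
      simp [WW, TT, dd, pochC]
    rw [hW0, pochC_zero]
    simp only [zero_add, pow_zero, pow_one, Nat.factorial_one, Nat.cast_one]
    linear_combination hb
  | succ n ih =>
    intro t ht
    have IH := ih t ht
    have hopen : IsOpen {z : ℂ | ‖z‖ < 1} := by
      have he : {z : ℂ | ‖z‖ < 1} = Metric.ball 0 1 := by
        ext z; simp [Metric.mem_ball, dist_eq_norm]
      rw [he]; exact Metric.isOpen_ball
    have hEv : (fun z => pochC (1/2) n * z^(n+1) * (∑' k, aa n k * z^k))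
        =ᶠ[𝓝 t] (fun z => 2*(-1)^n*((n+1).factorial:ℂ) * (1 - WW n z)) := by
      filter_upwards [hopen.mem_nhds ht] with z hz
      exact ih z hz
    have hP : HasDerivAt (fun z => pochC (1/2) n * z^(n+1) * (∑' k, aa n k * z^k))
        (pochC (1/2) n * (((((n+1:ℕ)):ℂ) * t^(n+1-1)) * (∑' k, aa n k * t^k)
          + t^(n+1) * (cc n * ∑' k, aa (n+1) k * t^k))) t := by
      have h1 := (hasDerivAt_pow (n+1) t).mul (hasDerivAt_hyp n ht)
      have h2 := h1.const_mul (pochC (1/2) n)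
      have hfun : (fun z => pochC (1/2) n * z^(n+1) * (∑' k, aa n k * z^k))
          = fun z => pochC (1/2) n * (z^(n+1) * (∑' k, aa n k * z^k)) := by
        funext z; ring
      rw [hfun]; exact h2
    have hQ : HasDerivAt (fun z => 2*(-1)^n*((n+1).factorial:ℂ) * (1 - WW n z))
        ((2*(-1)^n*((n+1).factorial:ℂ))
          * -(((n:ℂ)+1) * dd (n+1) * (-1)^n * t^n * TT (n+1) t)) t :=
      ((hasDerivAt_WW n ht).const_sub 1).const_mul _
    have e4 : pochC (1/2) n * (((((n+1:ℕ)):ℂ) * t^(n+1-1)) * (∑' k, aa n k * t^k)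
          + t^(n+1) * (cc n * ∑' k, aa (n+1) k * t^k))
        = (2*(-1)^n*((n+1).factorial:ℂ))
          * -(((n:ℂ)+1) * dd (n+1) * (-1)^n * t^n * TT (n+1) t) := by
      rw [← hP.deriv, ← hQ.deriv]
      exact hEv.deriv_eq
    rw [Nat.add_sub_cancel] at e4
    push_cast at e4
    have hq : cc n * (2+(n:ℂ)) = (1/2+(n:ℂ))*(1+(n:ℂ)) := by
      unfold cc
      have h2n : ((2:ℂ) + n) ≠ 0 := two_add_ne' n
      field_simp
    have hW : WW (n+1) t = WW n t + dd (n+1)*(-1)^(n+1)*t^(n+1)*TT (n+1) t := by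
      simp [WW, Finset.sum_range_succ]
    have hf2 : (((n+1)+1).factorial : ℂ) = ((n:ℂ)+2)*((n+1).factorial : ℂ) := by
      rw [Nat.factorial_succ (n+1), Nat.cast_mul]
      push_cast; ring
    refine mul_left_cancel₀ (nat_add_one_ne n) ?_
    rw [pochC_succ, hW, hf2]
    push_cast
    linear_combination (t*((n:ℂ)+2)) * e4 - (((n:ℂ)+1)*((n:ℂ)+2)) * IH
      - (pochC (1/2) n * t^(n+2) * (∑' k, aa (n+1) k * t^k)) * hq

end Red

theorem reduction_first_diff (n : ℕ) (t : ℂ) (ht : ‖t‖ < 1) (ht0 : t ≠ 0) :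
    hyp2F1 (1/2 + n) (1 + n) (2 + n) t =
      2 * (-1) ^ n * ((n + 1).factorial : ℂ) / (pochC (1/2) n * t ^ (n + 1)) *
        (1 - (1 - t) ^ ((1 : ℂ)/2) *
          ∑ k ∈ Finset.range (n + 1), pochC (-1/2) k / (k.factorial : ℂ) * (t / (t - 1)) ^ k) := by
  have hkey := Red.key n t ht
  have hne := Red.one_sub_ne_zero ht
  have hC : pochC (1/2) n ≠ 0 := by
    refine Red.pochC_ne_zero ?_ n
    norm_num
  have htp : t ^ (n+1) ≠ 0 := pow_ne_zero _ ht0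
  have hS : (1 - t)^((1:ℂ)/2)
      * ∑ k ∈ Finset.range (n + 1), pochC (-1/2) k / (k.factorial : ℂ) * (t / (t - 1)) ^ k
      = Red.WW n t := by
    rw [Finset.mul_sum]
    refine Finset.sum_congr rfl fun k _ => ?_
    have hm : ((-1:ℂ))^k * (-1)^k = 1 := by
      rw [← pow_add, ← two_mul, pow_mul]
      norm_num
    have h1 : Red.TT k t = (1-t)^((1:ℂ)/2) / (1-t)^k := by
      unfold Red.TT
      rw [Complex.cpow_sub _ _ hne, Complex.cpow_natCast]
    have h2 : (t/(t-1))^k = (-1)^k * t^k / (1-t)^k := by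
      rw [div_pow, show (t - 1) = -(1-t) by ring, neg_pow]
      rw [div_eq_div_iff (by exact mul_ne_zero (pow_ne_zero _ (by norm_num)) (pow_ne_zero _ hne))
        (pow_ne_zero _ hne)]
      linear_combination (-(t^k * (1-t)^k)) * hm
    show (1 - t)^((1:ℂ)/2) * (pochC (-1/2) k / (k.factorial : ℂ) * (t / (t - 1)) ^ k)
      = Red.dd k * (-1)^k * t^k * Red.TT k t
    rw [h1, h2]
    unfold Red.dd
    have hfk := Red.fact_ne k
    have hpk : ((1:ℂ) - t)^k ≠ 0 := pow_ne_zero _ hne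
    field_simp
  rw [Red.hyp_eq, hS, div_mul_eq_mul_div, eq_div_iff (mul_ne_zero hC htp)]
  linear_combination hkey
end

section
/- For every nonnegative integer n and complex t with |t| < 1, t ≠ 0: ₂F₁(1/2 + n, 1 + n; 2 + n; t) = (2(-1)^n (n+1)! / ((1/2)_n · t^{n+1})) · [1 - (1-t)^{1/2-n} · ∑_{k=0}^{n} ((1/2 - n)_k / k!) t^k]. -/
open scoped BigOperators

open Filter Topology Metric Complex Finset

lemma pochC_zero (a : ℂ) : pochC a 0 = 1 := Finset.prod_range_zero _

lemma pochC_succ (a : ℂ) (k : ℕ) : pochC a (k+1) = pochC a k * (a + k) :=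
  Finset.prod_range_succ _ _

lemma pochC_ne_zero {a : ℂ} (ha : 0 < a.re) (k : ℕ) : pochC a k ≠ 0 := by
  refine Finset.prod_ne_zero_iff.mpr fun i _ => ?_
  intro h
  have h2 : (a + i).re = 0 := by rw [h]; simp
  simp only [Complex.add_re, Complex.natCast_re] at h2
  have : (0:ℝ) < a.re + i := by positivity
  linarith

lemma norm_add_nat_ge (b : ℂ) (k : ℕ) : (k : ℝ) - ‖b‖ ≤ ‖b + (k:ℂ)‖ := by
  have h1 : ‖(k:ℂ)‖ ≤ ‖b + (k:ℂ)‖ + ‖b‖ := by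
    calc ‖(k:ℂ)‖ = ‖(b + k) - b‖ := by ring_nf
    _ ≤ ‖b + (k:ℂ)‖ + ‖b‖ := norm_sub_le _ _
  have h2 : ‖(k:ℂ)‖ = (k:ℝ) := by simp
  linarith

lemma tendsto_shift_div (a b : ℂ) :
    Tendsto (fun k : ℕ => (a + k) / (b + k)) atTop (𝓝 1) := by
  have hb : Tendsto (fun k : ℕ => ‖b + (k:ℂ)‖) atTop atTop := by
    refine tendsto_atTop_mono' atTop ?_ ?_ (f₁ := fun k : ℕ => (k:ℝ) - ‖b‖)
    · filter_upwards with k using norm_add_nat_ge b k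
    · exact (tendsto_natCast_atTop_atTop).atTop_add tendsto_const_nhds
  have hinv : Tendsto (fun k : ℕ => (b + (k:ℂ))⁻¹) atTop (𝓝 0) := by
    rw [tendsto_zero_iff_norm_tendsto_zero]
    simpa [norm_inv] using (hb.inv_tendsto_atTop.congr (fun _ => rfl) : Tendsto (fun k : ℕ => ‖b + (k:ℂ)‖⁻¹) atTop (𝓝 0))
  have key : Tendsto (fun k : ℕ => 1 + (a - b) * (b + (k:ℂ))⁻¹) atTop (𝓝 1) := by
    have := (tendsto_const_nhds (x := (a - b)) (f := atTop (α := ℕ))).mul hinv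
    simpa using (tendsto_const_nhds (x := (1:ℂ))).add this
  refine key.congr' ?_
  filter_upwards [hb.eventually_gt_atTop 0] with k hk
  have hbk : b + (k:ℂ) ≠ 0 := by
    intro h0; rw [h0] at hk; simp at hk
  field_simp
  ring

section
variable (a : ℕ → ℂ)

lemma summable_norm_aux (ha : ∀ k, a k ≠ 0)
    (hrat : Tendsto (fun k => a (k+1) / a k) atTop (𝓝 1))
    {r : ℝ} (hr0 : 0 < r) (hr1 : r < 1) :
    Summable (fun k => ‖a k‖ * (k+1) * r^k) := by
  set f : ℕ → ℝ := fun k => ‖a k‖ * (k+1) * r^k with hf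
  have hfpos : ∀ k, 0 < f k := fun k => by
    have := norm_pos_iff.mpr (ha k)
    positivity
  refine summable_of_ratio_test_tendsto_lt_one hr1 ?_ ?_
  · filter_upwards with k using (hfpos k).ne'
  · have h1 : Tendsto (fun k : ℕ => ‖a (k+1) / a k‖) atTop (𝓝 1) := by
      simpa using hrat.norm
    have h2 : Tendsto (fun k : ℕ => ((k:ℝ)+2)/((k:ℝ)+1)) atTop (𝓝 1) := by
      have h3 : Tendsto (fun k : ℕ => 1 + 1/((k:ℝ)+1)) atTop (𝓝 1) := by
        have := tendsto_one_div_add_atTop_nhds_zero_nat (𝕜 := ℝ)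
        simpa using (tendsto_const_nhds (x := (1:ℝ))).add this
      refine h3.congr fun k => ?_
      field_simp
      ring
    have key : ∀ k : ℕ, ‖f (k+1)‖ / ‖f k‖ = ‖a (k+1) / a k‖ * (((k:ℝ)+2)/((k:ℝ)+1)) * r := by
      intro k
      have hak : (0:ℝ) < ‖a k‖ := norm_pos_iff.mpr (ha k)
      have hak1 : (0:ℝ) < ‖a (k+1)‖ := norm_pos_iff.mpr (ha (k+1))
      have hrk : (0:ℝ) < r ^ k := pow_pos hr0 k
      rw [Real.norm_eq_abs (f (k+1)), Real.norm_eq_abs (f k), abs_of_pos (hfpos _),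
        abs_of_pos (hfpos _), norm_div]
      simp only [hf]
      rw [pow_succ]
      push_cast
      rw [div_mul_div_comm, div_mul_eq_mul_div, div_eq_div_iff (by positivity) (by positivity)]
      ring
    have h4 := (h1.mul h2).mul (tendsto_const_nhds (x := r) (f := atTop (α := ℕ)))
    simp only [one_mul] at h4
    exact h4.congr fun k => (key k).symm
lemma summable_pow (ha : ∀ k, a k ≠ 0)
    (hrat : Tendsto (fun k => a (k+1) / a k) atTop (𝓝 1))
    {t : ℂ} (ht : ‖t‖ < 1) : Summable (fun k => a k * t ^ k) := by
  set r : ℝ := (1 + ‖t‖)/2 with hr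
  have hr0 : 0 < r := by positivity
  have hr1 : r < 1 := by rw [hr]; linarith
  have htr : ‖t‖ ≤ r := by rw [hr]; linarith [norm_nonneg t]
  refine Summable.of_norm (Summable.of_nonneg_of_le (fun k => norm_nonneg _) (fun k => ?_)
    (summable_norm_aux a ha hrat hr0 hr1))
  rw [norm_mul, norm_pow]
  calc ‖a k‖ * ‖t‖ ^ k ≤ ‖a k‖ * r ^ k := by gcongr
    _ ≤ ‖a k‖ * (k+1) * r ^ k := by
        have h1 : ‖a k‖ ≤ ‖a k‖ * (k+1) := by
          nlinarith [norm_nonneg (a k), Nat.cast_nonneg (α := ℝ) k]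
        gcongr
  
lemma hasDerivAt_tsum_pow (ha : ∀ k, a k ≠ 0)
    (hrat : Tendsto (fun k => a (k+1) / a k) atTop (𝓝 1))
    {t : ℂ} (ht : ‖t‖ < 1) :
    HasDerivAt (fun z : ℂ => ∑' k, a k * z ^ k)
      (∑' k, a k * ((k : ℂ) * t ^ (k-1))) t := by
  set r : ℝ := (1 + ‖t‖)/2 with hr
  have hr0 : 0 < r := by positivity
  have hr1 : r < 1 := by rw [hr]; linarith
  have htr : ‖t‖ < r := by rw [hr]; linarith
  set u : ℕ → ℝ := fun k => ‖a k‖ * (k+1) * r ^ (k-1) with hu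
  have hu_sum : Summable u := by
    refine Summable.of_nonneg_of_le (fun k => by positivity) (fun k => ?_)
      ((summable_norm_aux a ha hrat hr0 hr1).mul_left r⁻¹)
    match k with
    | 0 => simp only [hu]
           have h1 : (1:ℝ) ≤ r⁻¹ := (one_le_inv₀ hr0).mpr hr1.le
           simp only [Nat.zero_sub, pow_zero, Nat.cast_zero, zero_add, mul_one]
           nlinarith [norm_nonneg (a 0)]
    | (k+1) => simp only [hu, Nat.add_sub_cancel]
               rw [pow_succ]
               push_cast
               rw [mul_comm (r⁻¹)]
               rw [mul_assoc (‖a (k+1)‖ * ((k:ℝ)+1+1))]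
               gcongr
               rw [mul_inv_cancel_right₀ hr0.ne']
  refine hasDerivAt_tsum_of_isPreconnected hu_sum Metric.isOpen_ball
    (Convex.isPreconnected (convex_ball 0 r)) (g := fun k z => a k * z ^ k)
    (g' := fun k z => a k * ((k : ℂ) * z ^ (k-1))) (y₀ := 0) ?_ ?_ ?_ ?_ ?_
  · intro k z _
    exact (hasDerivAt_pow k z).const_mul (a k)
  · intro k z hz
    rw [Metric.mem_ball, dist_zero_right] at hz
    rw [norm_mul, norm_mul, norm_pow, hu]
    have h1 : ‖z‖ ^ (k-1) ≤ r ^ (k-1) := by gcongr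
    have h2 : ‖(k:ℂ)‖ = (k:ℝ) := by simp
    rw [h2]
    calc ‖a k‖ * ((k:ℝ) * ‖z‖^(k-1)) ≤ ‖a k‖ * ((k+1) * r^(k-1)) := by
          gcongr
          · linarith [Nat.cast_nonneg (α := ℝ) k]
      _ = ‖a k‖ * (k+1) * r^(k-1) := by ring
  · exact Metric.mem_ball_self hr0 (x := (0:ℂ))
  · refine summable_of_ne_finset_zero (s := {0}) fun k hk => ?_
    have : k ≠ 0 := by simpa using hk
    simp [zero_pow this]
  · exact Metric.mem_ball.mpr (by simpa [dist_zero_right] using htr)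

lemma summable_deriv_pow (ha : ∀ k, a k ≠ 0)
    (hrat : Tendsto (fun k => a (k+1) / a k) atTop (𝓝 1))
    {t : ℂ} (ht : ‖t‖ < 1) :
    Summable (fun k => a k * ((k : ℂ) * t ^ (k-1))) := by
  set r : ℝ := (1 + ‖t‖)/2 with hr
  have hr0 : 0 < r := by positivity
  have hr1 : r < 1 := by rw [hr]; linarith
  have htr : ‖t‖ < r := by rw [hr]; linarith
  set u : ℕ → ℝ := fun k => ‖a k‖ * (k+1) * r ^ (k-1) with hu
  have hu_sum : Summable u := by
    refine Summable.of_nonneg_of_le (fun k => by positivity) (fun k => ?_)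
      ((summable_norm_aux a ha hrat hr0 hr1).mul_left r⁻¹)
    match k with
    | 0 => simp only [hu]
           have h1 : (1:ℝ) ≤ r⁻¹ := (one_le_inv₀ hr0).mpr hr1.le
           simp only [Nat.zero_sub, pow_zero, Nat.cast_zero, zero_add, mul_one]
           nlinarith [norm_nonneg (a 0)]
    | (k+1) => simp only [hu, Nat.add_sub_cancel]
               rw [pow_succ]
               push_cast
               rw [mul_comm (r⁻¹)]
               rw [mul_assoc (‖a (k+1)‖ * ((k:ℝ)+1+1))]
               gcongr
               rw [mul_inv_cancel_right₀ hr0.ne']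
  refine Summable.of_norm (Summable.of_nonneg_of_le (fun k => norm_nonneg _)
    (fun k => ?_) hu_sum)
  rw [norm_mul, norm_mul, norm_pow, hu]
  have h1 : ‖t‖ ^ (k-1) ≤ r ^ (k-1) := by gcongr
  have h2 : ‖(k:ℂ)‖ = (k:ℝ) := by simp
  rw [h2]
  calc ‖a k‖ * ((k:ℝ) * ‖t‖^(k-1)) ≤ ‖a k‖ * ((k+1) * r^(k-1)) := by
        gcongr
        · linarith [Nat.cast_nonneg (α := ℝ) k]
    _ = ‖a k‖ * (k+1) * r^(k-1) := by ring
end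

lemma one_sub_ne_zero_of_norm_lt_one {z : ℂ} (hz : ‖z‖ < 1) : (1:ℂ) - z ≠ 0 := by
  intro h
  have : z = 1 := by linear_combination -h
  rw [this] at hz; simp at hz

lemma one_sub_mem_slitPlane {z : ℂ} (hz : ‖z‖ < 1) : (1:ℂ) - z ∈ Complex.slitPlane := by
  rw [Complex.mem_slitPlane_iff]
  left
  have : z.re ≤ ‖z‖ := by
    exact Complex.re_le_norm z
  simp only [Complex.sub_re, Complex.one_re]
  linarith

lemma eq_at_of_deriv_zero {f : ℂ → ℂ}
    (hf : ∀ x ∈ Metric.ball (0:ℂ) 1, HasDerivAt f 0 x) {t : ℂ} (ht : ‖t‖ < 1) :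
    f t = f 0 := by
  have h := Convex.norm_image_sub_le_of_norm_hasDerivWithin_le
    (f := f) (f' := fun _ => (0:ℂ)) (s := Metric.ball (0:ℂ) 1) (C := 0)
    (fun x hx => (hf x hx).hasDerivWithinAt) (fun x _ => by simp)
    (convex_ball 0 1) (Metric.mem_ball_self one_pos)
    (Metric.mem_ball.mpr (by simpa [dist_zero_right] using ht))
  simp only [zero_mul, norm_le_zero_iff, sub_eq_zero] at h
  exact h


lemma binomial_tsum (s : ℂ) (hs : 0 < s.re) {t : ℂ} (ht : ‖t‖ < 1) :
    ∑' k : ℕ, pochC s k / (k.factorial : ℂ) * t ^ k = (1 - t) ^ (-s) := by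
  set a : ℕ → ℂ := fun k => pochC s k / (k.factorial : ℂ) with haa
  have hfac : ∀ k : ℕ, ((k.factorial : ℂ)) ≠ 0 :=
    fun k => Nat.cast_ne_zero.mpr k.factorial_ne_zero
  have ha : ∀ k, a k ≠ 0 := fun k => div_ne_zero (pochC_ne_zero hs k) (hfac k)
  have h1k : ∀ k : ℕ, ((1:ℂ) + k) ≠ 0 := by
    intro k
    have := Nat.cast_add_one_ne_zero (R := ℂ) k
    rwa [add_comm] at this
  have hrec : ∀ k : ℕ, a (k+1) * ((1:ℂ) + k) = a k * (s + k) := by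
    intro k
    have e : (((k+1).factorial : ℂ)) = ((1:ℂ)+k) * k.factorial := by
      rw [Nat.factorial_succ]; push_cast; ring
    simp only [haa, pochC_succ]
    have hden : ((1:ℂ)+k) * k.factorial ≠ 0 := mul_ne_zero (h1k k) (hfac k)
    rw [e, div_mul_eq_mul_div, mul_comm (pochC s k / (k.factorial:ℂ)),
      ← mul_div_assoc, div_eq_div_iff hden (hfac k)]
    ring
  have hrat : Tendsto (fun k => a (k+1) / a k) atTop (𝓝 1) := by
    refine (tendsto_shift_div s 1).congr fun k => ?_
    rw [div_eq_div_iff (h1k k) (ha k)]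
    linear_combination - hrec k
  set S : ℂ → ℂ := fun z => ∑' k : ℕ, a k * z ^ k with hSS
  have key : ∀ z ∈ Metric.ball (0:ℂ) 1, HasDerivAt (fun z => (1-z)^s * S z) 0 z := by
    intro z hz
    rw [Metric.mem_ball, dist_zero_right] at hz
    have hne := one_sub_ne_zero_of_norm_lt_one hz
    have hd1 : HasDerivAt (fun z : ℂ => (1-z)^s) (s * (1-z)^(s-1) * (-1)) z :=
      HasDerivAt.cpow_const ((hasDerivAt_id z).const_sub 1) (one_sub_mem_slitPlane hz)
    have hd2 : HasDerivAt S (∑' k : ℕ, a k * ((k:ℂ) * z^(k-1))) z :=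
      hasDerivAt_tsum_pow a ha hrat hz
    have hmul := hd1.mul hd2
    have hsum1 : Summable (fun k : ℕ => a k * z ^ k) := summable_pow a ha hrat hz
    have hsum2 : Summable (fun k : ℕ => a k * ((k:ℂ) * z^(k-1))) :=
      summable_deriv_pow a ha hrat hz
    have hsum3 : Summable (fun k : ℕ => (k:ℂ) * a k * z ^ k) := by
      refine (hsum2.mul_left z).congr fun k => ?_
      match k with
      | 0 => simp
      | (k+1) => simp only [Nat.add_sub_cancel]; push_cast; ring
    have hsum4 : Summable (fun k : ℕ => (s + (k:ℂ)) * a k * z ^ k) := by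
      refine (((hsum1.mul_left s)).add hsum3).congr fun k => ?_
      ring
    have hzD : z * (∑' k : ℕ, a k * ((k:ℂ) * z^(k-1))) = ∑' k : ℕ, (k:ℂ) * a k * z ^ k := by
      rw [← tsum_mul_left]
      refine tsum_congr fun k => ?_
      match k with
      | 0 => simp
      | (k+1) => simp only [Nat.add_sub_cancel]; push_cast; ring
    have hD : (∑' k : ℕ, a k * ((k:ℂ) * z^(k-1))) = ∑' k : ℕ, (s + (k:ℂ)) * a k * z ^ k := by
      rw [Summable.tsum_eq_zero_add hsum2]
      simp only [Nat.cast_zero, mul_zero, zero_mul, zero_add, Nat.add_sub_cancel]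
      refine tsum_congr fun k => ?_
      push_cast
      linear_combination z^k * hrec k
    have hX : (1 - z) * (∑' k : ℕ, a k * ((k:ℂ) * z^(k-1))) - s * S z = 0 := by
      rw [sub_mul, one_mul, hzD, hSS]
      simp only []
      rw [show (s * ∑' k : ℕ, a k * z ^ k) = ∑' k : ℕ, s * (a k * z ^ k) from
        (tsum_mul_left).symm]
      conv_lhs => rw [hD]
      rw [← Summable.tsum_sub hsum4 hsum3, ← Summable.tsum_sub (hsum4.sub hsum3) (hsum1.mul_left s)]
      rw [show (0:ℂ) = ∑' (_ : ℕ), (0:ℂ) from tsum_zero.symm]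
      exact tsum_congr fun k => by ring
    have hpow : ((1:ℂ)-z)^(s-1) * (1-z) = (1-z)^s := by
      have h2 := Complex.cpow_add (x := 1-z) (s-1) 1 hne
      rw [Complex.cpow_one] at h2
      simpa [sub_add_cancel] using h2.symm
    have hzero : s * (1-z)^(s-1) * (-1) * S z
        + (1-z)^s * (∑' k : ℕ, a k * ((k:ℂ) * z^(k-1))) = 0 := by
      linear_combination ((1:ℂ)-z)^(s-1) * hX
        - (∑' k : ℕ, a k * ((k:ℂ) * z^(k-1))) * hpow
    rw [hzero] at hmul
    exact hmul
  have h0 := eq_at_of_deriv_zero key ht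
  have hS0 : S 0 = 1 := by
    simp only [hSS]
    rw [tsum_eq_single 0 (fun b hb => by simp [zero_pow hb])]
    simp [haa, pochC_zero]
  have h0' : ((1:ℂ)-t)^s * S t = 1 := by
    rw [h0]
    simp [hS0, Complex.one_cpow]
  have hne := one_sub_ne_zero_of_norm_lt_one ht
  have hcp : ((1:ℂ)-t)^s ≠ 0 := by
    intro h
    rcases (Complex.cpow_eq_zero_iff _ _).mp h with ⟨h1, _⟩
    exact hne h1
  have final : S t = (1 - t) ^ (-s) := by
    rw [Complex.cpow_neg, inv_eq_one_div, eq_div_iff hcp]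
    linear_combination h0'
  simpa only [hSS, haa] using final

lemma poch_div_fac_rec (s : ℂ) (k : ℕ) :
    (pochC s (k+1) / ((k+1).factorial : ℂ)) * ((1:ℂ)+k)
      = (pochC s k / (k.factorial : ℂ)) * (s + k) := by
  have hfac : ((k.factorial : ℂ)) ≠ 0 := Nat.cast_ne_zero.mpr k.factorial_ne_zero
  have h1k : ((1:ℂ) + k) ≠ 0 := by
    have := Nat.cast_add_one_ne_zero (R := ℂ) k
    rwa [add_comm] at this
  have e : (((k+1).factorial : ℂ)) = ((1:ℂ)+k) * k.factorial := by
    rw [Nat.factorial_succ]; push_cast; ring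
  have hden : ((1:ℂ)+k) * k.factorial ≠ 0 := mul_ne_zero h1k hfac
  rw [pochC_succ, e, div_mul_eq_mul_div, mul_comm (pochC s k / (k.factorial:ℂ)),
    ← mul_div_assoc, div_eq_div_iff hden hfac]
  ring

lemma poch_shift (n k : ℕ) :
    pochC ((1:ℂ)+n) k * ((1:ℂ)+n+k) = pochC ((2:ℂ)+n) k * ((1:ℂ)+n) := by
  induction k with
  | zero => simp [pochC_zero]
  | succ k ih =>
      rw [pochC_succ, pochC_succ]
      push_cast
      linear_combination ((2:ℂ)+n+k) * ih

lemma poch_reflect (n : ℕ) : pochC ((1:ℂ)/2 - n) n = (-1)^n * pochC (1/2) n := by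
  unfold pochC
  rw [← Finset.prod_range_reflect (fun i => (1:ℂ)/2 - n + i) n]
  rw [show ((-1:ℂ))^n = ∏ _j ∈ Finset.range n, (-1:ℂ) from by rw [Finset.prod_const, Finset.card_range],
    ← Finset.prod_mul_distrib]
  refine Finset.prod_congr rfl fun j hj => ?_
  rw [Finset.mem_range] at hj
  have hj' : (((n - 1 - j : ℕ)):ℂ) = (n:ℂ) - 1 - j := by
    have h2 : n - 1 - j = n - (1 + j) := by omega
    rw [h2, Nat.cast_sub (by omega)]
    push_cast; ring
  rw [hj']; ring

lemma re_half : ((1:ℂ)/2).re = 1/2 := by norm_num [Complex.div_re]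

lemma re_half_add (n : ℕ) : (0:ℝ) < ((1:ℂ)/2 + n).re := by
  rw [Complex.add_re, re_half, Complex.natCast_re]
  positivity


theorem reduction_first_diff_alt (n : ℕ) (t : ℂ) (ht : ‖t‖ < 1) (ht0 : t ≠ 0) :
    hyp2F1 (1/2 + n) (1 + n) (2 + n) t =
      2 * (-1) ^ n * ((n + 1).factorial : ℂ) / (pochC (1/2) n * t ^ (n + 1)) *
        (1 - (1 - t) ^ ((1 : ℂ)/2 - n) *
          ∑ k ∈ Finset.range (n + 1), pochC (1/2 - n) k / (k.factorial : ℂ) * t ^ k) := by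
  have hfac : ∀ k : ℕ, ((k.factorial : ℂ)) ≠ 0 :=
    fun k => Nat.cast_ne_zero.mpr k.factorial_ne_zero
  have h1k : ∀ k : ℕ, ((1:ℂ) + k) ≠ 0 := fun k => by
    have := Nat.cast_add_one_ne_zero (R := ℂ) k; rwa [add_comm] at this
  have hre1n : (0:ℝ) < ((1:ℂ)+(n:ℂ)).re := by simp; positivity
  have hre2n : (0:ℝ) < ((2:ℂ)+(n:ℂ)).re := by
    simp only [Complex.add_re, Complex.natCast_re]
    norm_num
    positivity
  have h2k : ∀ k : ℕ, ((2:ℂ) + (n:ℂ) + k) ≠ 0 := fun k => by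
    intro h
    have hre : ((2:ℂ)+(n:ℂ)+(k:ℂ)).re = 2+(n:ℝ)+(k:ℝ) := by simp
    rw [h] at hre
    simp only [Complex.zero_re] at hre
    have : (0:ℝ) < 2+(n:ℝ)+(k:ℝ) := by positivity
    linarith
  have hpoch12 : pochC ((1:ℂ)/2) n ≠ 0 := pochC_ne_zero (by rw [re_half]; norm_num) n
  set a : ℕ → ℂ := fun k => pochC ((1:ℂ)/2 - n) k / (k.factorial : ℂ) with haa
  set b : ℕ → ℂ := fun k =>
    pochC ((1:ℂ)/2 + n) k * pochC (1 + (n:ℂ)) k / (pochC (2 + (n:ℂ)) k * (k.factorial : ℂ))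
    with hbb
  set C : ℂ := 2 * (-1)^n * (((n+1).factorial : ℕ) : ℂ) / pochC ((1:ℂ)/2) n with hCC
  have hbne : ∀ k, b k ≠ 0 := fun k =>
    div_ne_zero (mul_ne_zero (pochC_ne_zero (re_half_add n) k) (pochC_ne_zero hre1n k))
      (mul_ne_zero (pochC_ne_zero hre2n k) (hfac k))
  have hbrec : ∀ k : ℕ, b (k+1) * ((2+(n:ℂ)+k) * ((1:ℂ)+k))
      = b k * (((1:ℂ)/2+n+k) * (1+(n:ℂ)+k)) := by
    intro k
    have e : (((k+1).factorial : ℂ)) = ((1:ℂ)+k) * k.factorial := by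
      rw [Nat.factorial_succ]; push_cast; ring
    simp only [hbb, pochC_succ, e]
    rw [div_mul_eq_mul_div, div_mul_eq_mul_div,
      div_eq_div_iff
        (mul_ne_zero (mul_ne_zero (pochC_ne_zero hre2n k) (h2k k))
          (mul_ne_zero (h1k k) (hfac k)))
        (mul_ne_zero (pochC_ne_zero hre2n k) (hfac k))]
    ring
  have hbrat : Filter.Tendsto (fun k => b (k+1)/b k) Filter.atTop (nhds 1) := by
    have h := (tendsto_shift_div ((1:ℂ)/2+n) 1).mul (tendsto_shift_div (1+(n:ℂ)) (2+(n:ℂ)))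
    rw [mul_one] at h
    refine h.congr fun k => ?_
    rw [div_mul_div_comm, div_eq_div_iff (mul_ne_zero (h1k k) (h2k k)) (hbne k)]
    linear_combination - hbrec k
  have hAc : ∀ k : ℕ, ((1:ℂ) + n + k) * b k
      = ((1:ℂ)+n) * (pochC ((1:ℂ)/2 + n) k / (k.factorial : ℂ)) := by
    intro k
    have hps := poch_shift n k
    simp only [hbb]
    rw [← mul_div_assoc, ← mul_div_assoc,
      div_eq_div_iff (mul_ne_zero (pochC_ne_zero hre2n k) (hfac k)) (hfac k)]
    linear_combination pochC ((1:ℂ)/2+n) k * (k.factorial : ℂ) * hps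
  have hreca : ∀ k : ℕ, a (k+1) * ((1:ℂ)+k) = a k * ((1:ℂ)/2 - n + k) :=
    fun k => poch_div_fac_rec ((1:ℂ)/2 - n) k
  set P : ℂ → ℂ := fun z => ∑ k ∈ Finset.range (n+1), a k * z ^ k with hPP
  set H : ℂ → ℂ := fun z => ∑' k : ℕ, b k * z ^ k with hHH
  set Φ : ℂ → ℂ := fun z => z^(n+1) * H z - C * (1 - (1-z)^((1:ℂ)/2 - n) * P z) with hΦ
  have hconst : C * ((1:ℂ)/2) * a n = (n:ℂ) + 1 := by
    have hrf := poch_reflect n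
    have hfe : (((n+1).factorial : ℕ) : ℂ) = ((1:ℂ)+n) * (n.factorial : ℂ) := by
      rw [Nat.factorial_succ]; push_cast; ring
    have hneg : ((-1:ℂ))^n * (-1)^n = 1 := by rw [← mul_pow]; norm_num
    simp only [hCC, haa, hrf, hfe]
    rw [div_mul_eq_mul_div, div_mul_div_comm,
      div_eq_iff (mul_ne_zero hpoch12 (hfac n))]
    linear_combination ((1:ℂ)+n) * (n.factorial:ℂ) * pochC ((1:ℂ)/2) n * hneg
  have hderiv : ∀ z ∈ Metric.ball (0:ℂ) 1, HasDerivAt Φ 0 z := by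
    intro z hz
    rw [Metric.mem_ball, dist_zero_right] at hz
    have hne1 := one_sub_ne_zero_of_norm_lt_one hz
    have hdH : HasDerivAt H (∑' k : ℕ, b k * ((k:ℂ) * z^(k-1))) z :=
      hasDerivAt_tsum_pow b hbne hbrat hz
    have hd1 : HasDerivAt (fun z : ℂ => z^(n+1) * H z)
        ((((n+1:ℕ)):ℂ) * z^n * H z
          + z^(n+1) * (∑' k : ℕ, b k * ((k:ℂ) * z^(k-1)))) z := by
      have h := (hasDerivAt_pow (n+1) z).fun_mul hdH
      simpa only [Nat.add_sub_cancel] using h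
    have hdP : HasDerivAt P (∑ k ∈ Finset.range (n+1), a k * ((k:ℂ) * z^(k-1))) z := by
      simp only [hPP]
      exact HasDerivAt.fun_sum fun k _ => (hasDerivAt_pow k z).const_mul (a k)
    have hdcp : HasDerivAt (fun z : ℂ => (1-z)^((1:ℂ)/2 - n))
        (((1:ℂ)/2 - n) * (1-z)^((1:ℂ)/2 - n - 1) * (-1)) z :=
      HasDerivAt.cpow_const ((hasDerivAt_id z).const_sub 1) (one_sub_mem_slitPlane hz)
    have hd2 := ((hdcp.mul hdP).const_sub 1).const_mul C
    have hdΦ := hd1.sub hd2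
    have hsb : Summable (fun k : ℕ => b k * z^k) := summable_pow b hbne hbrat hz
    have hsDb : Summable (fun k : ℕ => b k * ((k:ℂ) * z^(k-1))) :=
      summable_deriv_pow b hbne hbrat hz
    have hskb : Summable (fun k : ℕ => (k:ℂ) * b k * z^k) := by
      refine (hsDb.mul_left z).congr fun k => ?_
      match k with
      | 0 => simp
      | (k+1) => simp only [Nat.add_sub_cancel]; push_cast; ring
    have hzDb : z * (∑' k : ℕ, b k * ((k:ℂ) * z^(k-1))) = ∑' k : ℕ, (k:ℂ) * b k * z^k := by
      rw [← tsum_mul_left]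
      refine tsum_congr fun k => ?_
      match k with
      | 0 => simp
      | (k+1) => simp only [Nat.add_sub_cancel]; push_cast; ring
    have hEA : (((n+1:ℕ)):ℂ) * z^n * H z
        + z^(n+1) * (∑' k : ℕ, b k * ((k:ℂ) * z^(k-1)))
        = ((1:ℂ)+n) * z^n * (1-z)^(-((1:ℂ)/2+n)) := by
      rw [pow_succ z n, mul_assoc (z^n) z, hzDb, hHH]
      simp only []
      rw [← binomial_tsum ((1:ℂ)/2+n) (re_half_add n) hz]
      rw [show (((n+1:ℕ)):ℂ) * z^n * (∑' k : ℕ, b k * z^k)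
          = ∑' k : ℕ, (((n+1:ℕ)):ℂ) * z^n * (b k * z^k) from tsum_mul_left.symm,
        show z^n * (∑' k : ℕ, (k:ℂ) * b k * z^k)
          = ∑' k : ℕ, z^n * ((k:ℂ) * b k * z^k) from tsum_mul_left.symm,
        show ((1:ℂ)+n) * z^n
            * (∑' k : ℕ, pochC ((1:ℂ)/2+n) k / (k.factorial : ℂ) * z^k)
          = ∑' k : ℕ, ((1:ℂ)+n) * z^n
            * (pochC ((1:ℂ)/2+n) k / (k.factorial : ℂ) * z^k) from tsum_mul_left.symm,
        ← Summable.tsum_add (hsb.mul_left _) (hskb.mul_left _)]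
      refine tsum_congr fun k => ?_
      push_cast
      linear_combination z^n * z^k * hAc k
    have hzP' : z * (∑ k ∈ Finset.range (n+1), a k * ((k:ℂ) * z^(k-1)))
        = ∑ k ∈ Finset.range (n+1), (k:ℂ) * a k * z^k := by
      rw [Finset.mul_sum]
      refine Finset.sum_congr rfl fun k _ => ?_
      match k with
      | 0 => simp
      | (k+1) => simp only [Nat.add_sub_cancel]; push_cast; ring
    have hP'shift : (∑ k ∈ Finset.range (n+1), a k * ((k:ℂ) * z^(k-1)))
        = ∑ k ∈ Finset.range n, ((1:ℂ)/2 - n + k) * (a k * z^k) := by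
      rw [Finset.sum_range_succ' (fun k => a k * ((k:ℂ) * z^(k-1))) n]
      simp only [Nat.cast_zero, zero_mul, mul_zero, add_zero, Nat.add_sub_cancel]
      refine Finset.sum_congr rfl fun k _ => ?_
      push_cast
      linear_combination z^k * hreca k
    have hEB : ((n:ℂ) - 1/2) * P z
        + (1-z) * (∑ k ∈ Finset.range (n+1), a k * ((k:ℂ) * z^(k-1)))
        = -((1:ℂ)/2) * a n * z^n := by
      rw [sub_mul 1 z, one_mul, hzP', hP'shift, hPP]
      simp only []
      have E5 : ((n:ℂ)-1/2) * (∑ k ∈ Finset.range (n+1), a k * z^k)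
          - (∑ k ∈ Finset.range (n+1), (k:ℂ) * a k * z^k)
          = ∑ k ∈ Finset.range (n+1), ((n:ℂ)-1/2-k) * (a k * z^k) := by
        rw [Finset.mul_sum, ← Finset.sum_sub_distrib]
        exact Finset.sum_congr rfl fun k _ => by ring
      have E3 : ∑ k ∈ Finset.range (n+1), ((n:ℂ)-1/2-k) * (a k * z^k)
          = (∑ k ∈ Finset.range n, ((n:ℂ)-1/2-k) * (a k * z^k))
            + (-((1:ℂ)/2)) * (a n * z^n) := by
        rw [Finset.sum_range_succ]
        congr 1
        ring
      have E6 : (∑ k ∈ Finset.range n, ((n:ℂ)-1/2-k) * (a k * z^k))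
          + (∑ k ∈ Finset.range n, ((1:ℂ)/2 - n + k) * (a k * z^k)) = 0 := by
        rw [← Finset.sum_add_distrib]
        exact Finset.sum_eq_zero fun k _ => by ring
      linear_combination E5 + E3 + E6
    have hpow2 : ((1:ℂ)-z)^((1:ℂ)/2 - n - 1) * (1-z) = (1-z)^((1:ℂ)/2 - n) := by
      have h2 := Complex.cpow_add (x := 1-z) ((1:ℂ)/2 - n - 1) 1 hne1
      rw [Complex.cpow_one] at h2
      simpa [sub_add_cancel] using h2.symm
    have hexp : -((1:ℂ)/2+n) = (1:ℂ)/2 - n - 1 := by ring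
    have hval : ((((n+1:ℕ)):ℂ) * z^n * H z
          + z^(n+1) * (∑' k : ℕ, b k * ((k:ℂ) * z^(k-1))))
        - C * -(((1:ℂ)/2 - n) * (1-z)^((1:ℂ)/2 - n - 1) * (-1) * P z
            + (1-z)^((1:ℂ)/2 - n)
              * (∑ k ∈ Finset.range (n+1), a k * ((k:ℂ) * z^(k-1)))) = 0 := by
      rw [hEA, hexp]
      linear_combination
        (-(C * (∑ k ∈ Finset.range (n+1), a k * ((k:ℂ) * z^(k-1))))) * hpow2
        + (C * ((1:ℂ)-z)^((1:ℂ)/2 - n - 1)) * hEB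
        + (-(z^n * ((1:ℂ)-z)^((1:ℂ)/2 - n - 1))) * hconst
    rw [hval] at hdΦ
    exact hdΦ
  have hΦ0 : Φ 0 = 0 := by
    simp only [hΦ, hPP, hHH]
    rw [Finset.sum_eq_single_of_mem 0 (Finset.mem_range.mpr (Nat.succ_pos n))
      (fun b _ hb => by simp [zero_pow hb])]
    simp [haa, pochC_zero, Complex.one_cpow, zero_pow (Nat.succ_ne_zero n)]
  have hΦt : Φ t = 0 := by rw [eq_at_of_deriv_zero hderiv ht, hΦ0]
  have hE : t^(n+1) * H t = C * (1 - (1-t)^((1:ℂ)/2 - n) * P t) := by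
    simp only [hΦ] at hΦt
    linear_combination hΦt
  have hH2 : hyp2F1 (1/2 + n) (1 + n) (2 + n) t = H t := by
    simp only [hHH, hbb, hyp2F1]
  have hCp : C * pochC ((1:ℂ)/2) n = 2 * (-1)^n * (((n+1).factorial : ℕ) : ℂ) := by
    rw [hCC]
    field_simp
  rw [hH2, div_mul_eq_mul_div, eq_div_iff (mul_ne_zero hpoch12 (pow_ne_zero _ ht0))]
  simp only [hPP, haa] at hE
  linear_combination pochC ((1:ℂ)/2) n * hE
    + (1 - (1-t)^((1:ℂ)/2 - (n:ℂ))
        * ∑ k ∈ Finset.range (n+1), pochC ((1:ℂ)/2 - n) k / (k.factorial : ℂ) * t^k) * hCp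
end

section
/- For every nonnegative integer n and real t with 0 < t < 1, the incomplete beta function satisfies B(1+n, 1/2 - n, t) = (2(-1)^n n! / (1/2)_n) · [1 - √(1-t) · ∑_{k=0}^{n} ((-1/2)_k / k!) (t/(t-1))^k]. -/
open scoped BigOperators

/-- Pochhammer symbol `(a)_k` on `ℝ`. -/
noncomputable def pochR (a : ℝ) (k : ℕ) : ℝ := ∏ i ∈ Finset.range k, (a + i)

/-- Incomplete beta function `B(ν, μ, t) = ∫_0^t x^{ν-1}(1-x)^{μ-1} dx`. -/
noncomputable def incBeta (ν μ t : ℝ) : ℝ :=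
  ∫ x in (0 : ℝ)..t, x ^ (ν - 1) * (1 - x) ^ (μ - 1)

lemma pochR_succ (a : ℝ) (k : ℕ) : pochR a (k+1) = pochR a k * (a + k) :=
  Finset.prod_range_succ _ _

lemma pochR_half_pos (n : ℕ) : 0 < pochR (1/2) n :=
  Finset.prod_pos fun i _ => by positivity

lemma poch_rel (n : ℕ) : 2 * (1/2 - n) * pochR (-1/2) n = pochR (1/2) n := by
  induction n with
  | zero => simp [pochR]
  | succ n ih =>
    rw [pochR_succ, pochR_succ]
    push_cast
    nlinarith [ih]

noncomputable def cR (k : ℕ) : ℝ := pochR (-1/2) k / k.factorial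

lemma cR_succ (n : ℕ) : cR (n+1) * (n+1) = ((n : ℝ) - 1/2) * cR n := by
  have h : (n.factorial : ℝ) ≠ 0 := Nat.cast_ne_zero.mpr n.factorial_ne_zero
  simp only [cR, pochR_succ, Nat.factorial_succ]
  push_cast
  field_simp
  ring

lemma key (n : ℕ) (u : ℝ) :
    (1/2) * ∑ k ∈ Finset.range (n+1), cR k * u^k
      + (1-u) * ∑ k ∈ Finset.range (n+1), cR k * (k * u^(k-1))
      = (1/2 - n) * cR n * u^n := by
  induction n with
  | zero =>
    rw [Finset.sum_range_one, Finset.sum_range_one]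
    norm_num [cR, pochR]
  | succ n ih =>
    rw [Finset.sum_range_succ (fun k => cR k * u^k) (n+1),
        Finset.sum_range_succ (fun k => cR k * ((k:ℝ) * u^(k-1))) (n+1)]
    have hc := cR_succ n
    norm_num
    linear_combination ih + u^n * hc

theorem incBeta_reduction (n : ℕ) (t : ℝ) (ht0 : 0 < t) (ht1 : t < 1) :
    incBeta (1 + n) (1/2 - n) t =
      2 * (-1) ^ n * (n.factorial : ℝ) / pochR (1/2) n *
        (1 - Real.sqrt (1 - t) *
          ∑ k ∈ Finset.range (n + 1), pochR (-1/2) k / (k.factorial : ℝ) * (t / (t - 1)) ^ k) := by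
  set C : ℝ := 2 * (-1) ^ n * (n.factorial : ℝ) / pochR (1/2) n with hC
  set g : ℝ → ℝ := fun x => C * (1 - Real.sqrt (1 - x) *
      ∑ k ∈ Finset.range (n + 1), cR k * (x / (x - 1)) ^ k) with hg
  set f : ℝ → ℝ := fun x => x ^ n * (1 - x) ^ ((1/2 - (n:ℝ)) - 1) with hf
  have hIcc : Set.uIcc (0:ℝ) t = Set.Icc 0 t := Set.uIcc_of_le ht0.le
  -- incBeta is the integral of f
  have h0 : incBeta (1 + n) (1/2 - n) t = ∫ x in (0:ℝ)..t, f x := by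
    unfold incBeta
    refine intervalIntegral.integral_congr fun x hx => ?_
    have he : (1 + (n:ℝ)) - 1 = (n:ℝ) := by ring
    rw [hf, he, Real.rpow_natCast]
  -- derivative
  have hderiv : ∀ x ∈ Set.uIcc (0:ℝ) t, HasDerivAt g (f x) x := by
    intro x hx
    rw [hIcc] at hx
    have hx1 : x < 1 := lt_of_le_of_lt hx.2 ht1
    have h1x : (0:ℝ) < 1 - x := by linarith
    have hx1' : x - 1 ≠ 0 := by intro h; linarith [sub_eq_zero.mp h]
    set s : ℝ := Real.sqrt (1 - x) with hs
    have hspos : 0 < s := Real.sqrt_pos.mpr h1x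
    have hs2 : s ^ 2 = 1 - x := Real.sq_sqrt h1x.le
    set u : ℝ := x / (x - 1) with hu
    set D : ℝ := ∑ k ∈ Finset.range (n+1), cR k * ((k:ℝ) * u^(k-1)) with hD
    set S : ℝ := ∑ k ∈ Finset.range (n+1), cR k * u^k with hS
    have hud : HasDerivAt (fun y => y / (y - 1)) (-1/((x-1)^2)) x := by
      have h := (hasDerivAt_id x).div ((hasDerivAt_id x).sub_const 1) hx1'
      refine h.congr_deriv ?_
      simp only [id]; ring
    have hSd : HasDerivAt (fun y => ∑ k ∈ Finset.range (n+1), cR k * (y/(y-1))^k)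
        (D * (-1/((x-1)^2))) x := by
      have h : HasDerivAt (fun y => ∑ k ∈ Finset.range (n+1), cR k * (y/(y-1))^k)
          (∑ k ∈ Finset.range (n+1), cR k * ((k:ℝ) * u^(k-1) * (-1/((x-1)^2)))) x := by
        refine HasDerivAt.fun_sum fun k _ => ?_
        exact (hud.pow k).const_mul (cR k)
      convert h using 1
      rw [hD, Finset.sum_mul]
      exact Finset.sum_congr rfl fun k _ => by ring
    have hsd : HasDerivAt (fun y => Real.sqrt (1 - y)) (-(1/(2*s))) x := by
      have h1 : HasDerivAt (fun y : ℝ => 1 - y) (-1) x := (hasDerivAt_id x).const_sub 1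
      have h := (Real.hasDerivAt_sqrt h1x.ne').comp x h1
      refine h.congr_deriv ?_
      rw [hs]; ring
    have hgd : HasDerivAt g (C * -((-(1/(2*s))) * S + s * (D * (-1/((x-1)^2))))) x :=
      ((hsd.mul hSd).const_sub 1).const_mul C
    convert hgd using 1
    -- algebra
    have hkey := key n u
    have hP : pochR (1/2) n ≠ 0 := (pochR_half_pos n).ne'
    have hfa : (n.factorial : ℝ) ≠ 0 := Nat.cast_ne_zero.mpr n.factorial_ne_zero
    have hsign : ((-1:ℝ)^n)^2 = 1 := by
      rw [← pow_mul, mul_comm, pow_mul]; norm_num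
    have h1u : 1 - u = 1/(1-x) := by
      rw [hu]; field_simp; ring
    have hupow : u ^ n = (-1)^n * x^n / (1-x)^n := by
      have : u = -(x / (1-x)) := by rw [hu]; field_simp; ring
      rw [this, neg_pow, div_pow]
      ring
    have hrpow : (1 - x) ^ ((1/2 - (n:ℝ)) - 1) = ((1-x)^n * s)⁻¹ := by
      rw [show (1/2 - (n:ℝ)) - 1 = -((n:ℝ) + 1/2) by ring, Real.rpow_neg h1x.le,
        Real.rpow_add h1x, Real.rpow_natCast, hs, Real.sqrt_eq_rpow]
    rw [← hS, ← hD] at hkey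
    rw [h1u, hupow] at hkey
    simp only [cR] at hkey
    have hpr := poch_rel n
    rw [hf, hC]
    simp only
    rw [hrpow]
    have hsne : s ≠ 0 := hspos.ne'
    have h1xn : (1-x)^n ≠ 0 := pow_ne_zero n h1x.ne'
    have hx2 : (x-1)^2 = s^2 * s^2 := by rw [hs2]; ring
    rw [hx2]
    field_simp
    field_simp at hkey
    rw [show (-(1/2):ℝ) = -1/2 by norm_num] at hkey
    linear_combination (x^n*pochR (1/2) n - (1-x)^n*(-1)^n*(n.factorial:ℝ)*S) * hs2
      - (-1)^n * hkey
      - (1-x)*(1-2*(n:ℝ))*pochR (-1/2) n*x^n * hsign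
      - x^n*(1-x) * hpr
  -- integrability
  have hint : IntervalIntegrable f MeasureTheory.volume 0 t := by
    apply ContinuousOn.intervalIntegrable
    rw [hIcc]
    intro x hx
    have h1x : (1:ℝ) - x ≠ 0 := by
      have := hx.2; intro h; nlinarith [sub_eq_zero.mp h]
    exact (((continuous_pow n).continuousAt).mul
      ((continuousAt_const.sub continuousAt_id).rpow_const (Or.inl h1x))).continuousWithinAt
  have hFTC := intervalIntegral.integral_eq_sub_of_hasDerivAt hderiv hint
  have hg0 : g 0 = 0 := by
    rw [hg]
    simp only
    rw [Finset.sum_eq_single 0]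
    · norm_num [cR, pochR]
    · intro k _ hk
      simp [zero_pow hk, zero_div]
    · simp
  rw [h0, hFTC, hg0, sub_zero, hg]
  simp only [cR]
end

section
/- For nonnegative integers n and real s, x with s + x > 0 and s > 0: ∫_0^∞ e^{-st} t^{-3/2} γ(n+1, xt) dt = -2√π · n! · [√s - √(s+x) · ∑_{k=0}^{n} ((-1/2)_k / k!) (x/(x+s))^k], where γ(ν, z) = ∫_0^z u^{ν-1} e^{-u} du is the lower incomplete gamma function. -/
open scoped BigOperators Real
open MeasureTheory Set Real Filter Topology

/-- Lower incomplete gamma function `γ(ν, z) = ∫_0^z u^{ν-1} e^{-u} du`. -/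
noncomputable def lowerGamma (ν z : ℝ) : ℝ :=
  ∫ u in (0 : ℝ)..z, u ^ (ν - 1) * Real.exp (-u)

-- L1
lemma integrableOn_rpow_exp {a r : ℝ} (ha : 0 < a) (hr : 0 < r) :
    IntegrableOn (fun t : ℝ => t ^ (a - 1) * Real.exp (-(r * t))) (Set.Ioi 0) := by
  have h1 : IntegrableOn (fun t : ℝ => Real.exp (-(r * t)) * (r * t) ^ (a - 1)) (Set.Ioi 0) := by
    have := (MeasureTheory.integrableOn_Ioi_comp_mul_left_iff
      (fun u : ℝ => Real.exp (-u) * u ^ (a - 1)) 0 hr).mpr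
    rw [mul_zero] at this
    exact this (Real.GammaIntegral_convergent ha)
  have h2 : IntegrableOn (fun t : ℝ => r ^ (1 - a) * (Real.exp (-(r * t)) * (r * t) ^ (a - 1)))
      (Set.Ioi 0) := h1.const_mul _
  refine h2.congr_fun (fun t ht => ?_) measurableSet_Ioi
  have htr : (r * t) ^ (a - 1) = r ^ (a - 1) * t ^ (a - 1) :=
    Real.mul_rpow hr.le (le_of_lt ht)
  beta_reduce
  rw [htr]
  rw [show r ^ (1 - a) * (Real.exp (-(r * t)) * (r ^ (a - 1) * t ^ (a - 1)))
      = (r ^ (1 - a) * r ^ (a - 1)) * (t ^ (a - 1) * Real.exp (-(r * t))) by ring,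
    ← Real.rpow_add hr]
  norm_num

lemma continuousOn_rpow_Ioi (r : ℝ) : ContinuousOn (fun t : ℝ => t ^ r) (Set.Ioi 0) :=
  fun t ht => (Real.continuousAt_rpow_const t r (Or.inl (ne_of_gt ht))).continuousWithinAt

-- L3
lemma integrableOn_g {a : ℝ} (ha : 0 < a) :
    IntegrableOn (fun t : ℝ => t ^ (-(3:ℝ)/2) * (1 - Real.exp (-(a * t)))) (Set.Ioi 0) := by
  have hcont : ContinuousOn (fun t : ℝ => t ^ (-(3:ℝ)/2) * (1 - Real.exp (-(a * t))))
      (Set.Ioi 0) :=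
    (continuousOn_rpow_Ioi _).mul (Continuous.continuousOn (by continuity))
  have key : ∀ t : ℝ, 0 < t → 0 ≤ 1 - Real.exp (-(a * t)) ∧ 1 - Real.exp (-(a * t)) ≤ a * t := by
    intro t ht
    constructor
    · simp only [sub_nonneg, Real.exp_le_one_iff, Left.neg_nonpos_iff]
      positivity
    · nlinarith [Real.add_one_le_exp (-(a*t)), Real.exp_pos (-(a*t))]
  rw [show Set.Ioi (0:ℝ) = Set.Ioc 0 1 ∪ Set.Ioi 1 by
    rw [Set.Ioc_union_Ioi_eq_Ioi zero_le_one]]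
  refine IntegrableOn.union ?_ ?_
  · -- on (0,1]
    have hmaj : IntegrableOn (fun t : ℝ => a * t ^ (-(1:ℝ)/2)) (Set.Ioc 0 1) := by
      have := (intervalIntegral.intervalIntegrable_rpow' (r := -(1:ℝ)/2) (by norm_num) (a := 0) (b := 1))
      rw [intervalIntegrable_iff_integrableOn_Ioc_of_le zero_le_one] at this
      exact this.const_mul a
    refine Integrable.mono' hmaj
      ((hcont.mono Set.Ioc_subset_Ioi_self).aestronglyMeasurable measurableSet_Ioc)
      ((ae_restrict_iff' measurableSet_Ioc).2 (Eventually.of_forall fun t ht => ?_))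
    have h1 := key t ht.1
    have ht0 : (0:ℝ) < t := ht.1
    rw [Real.norm_eq_abs, abs_mul, abs_of_nonneg (Real.rpow_nonneg ht0.le _),
      abs_of_nonneg h1.1]
    calc t ^ (-(3:ℝ)/2) * (1 - Real.exp (-(a * t)))
        ≤ t ^ (-(3:ℝ)/2) * (a * t) :=
          mul_le_mul_of_nonneg_left h1.2 (Real.rpow_nonneg ht0.le _)
      _ = a * (t ^ (-(3:ℝ)/2) * t ^ (1:ℝ)) := by rw [Real.rpow_one]; ring
      _ = a * t ^ (-(1:ℝ)/2) := by rw [← Real.rpow_add ht0]; norm_num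
  · -- on (1,∞)
    have hmaj : IntegrableOn (fun t : ℝ => t ^ (-(3:ℝ)/2)) (Set.Ioi 1) :=
      integrableOn_Ioi_rpow_of_lt (by norm_num) one_pos
    refine Integrable.mono' hmaj
      ((hcont.mono (Set.Ioi_subset_Ioi zero_le_one)).aestronglyMeasurable measurableSet_Ioi)
      ((ae_restrict_iff' measurableSet_Ioi).2 (Eventually.of_forall fun t ht => ?_))
    have ht0 : (0:ℝ) < t := lt_trans one_pos ht
    have h1 := key t ht0
    rw [Real.norm_eq_abs, abs_mul, abs_of_nonneg (Real.rpow_nonneg ht0.le _),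
      abs_of_nonneg h1.1]
    have hle : 1 - Real.exp (-(a * t)) ≤ 1 := by
      have := (Real.exp_pos (-(a*t))).le; linarith
    calc t ^ (-(3:ℝ)/2) * (1 - Real.exp (-(a * t)))
        ≤ t ^ (-(3:ℝ)/2) * 1 :=
          mul_le_mul_of_nonneg_left hle (Real.rpow_nonneg ht0.le _)
      _ = t ^ (-(3:ℝ)/2) := mul_one _

-- L4
lemma integral_g {a : ℝ} (ha : 0 < a) :
    ∫ t in Set.Ioi (0:ℝ), t ^ (-(3:ℝ)/2) * (1 - Real.exp (-(a * t)))
      = 2 * Real.sqrt π * Real.sqrt a := by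
  set F : ℝ → ℝ := fun t => -2 * t ^ (-(1:ℝ)/2) * (1 - Real.exp (-(a * t))) with hF
  have hexp : ∀ t : ℝ, HasDerivAt (fun u : ℝ => 1 - Real.exp (-(a * u)))
      (a * Real.exp (-(a * t))) t := by
    intro t
    have h1 : HasDerivAt (fun u : ℝ => -(a * u)) (-a) t := by
      simpa using ((hasDerivAt_id t).const_mul (-a))
    have h2 := (Real.hasDerivAt_exp (-(a * t))).comp t h1
    have h3 := h2.const_sub 1
    refine h3.congr_deriv ?_
    ring
  have hderiv : ∀ t ∈ Set.Ioi (0:ℝ), HasDerivAt F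
      (t ^ (-(3:ℝ)/2) * (1 - Real.exp (-(a * t)))
        - 2 * a * (t ^ ((1:ℝ)/2 - 1) * Real.exp (-(a * t)))) t := by
    intro t ht
    have h1 : HasDerivAt (fun u : ℝ => -2 * u ^ (-(1:ℝ)/2))
        (-2 * (-(1:ℝ)/2 * t ^ (-(1:ℝ)/2 - 1))) t :=
      (Real.hasDerivAt_rpow_const (Or.inl (ne_of_gt ht))).const_mul (-2)
    have h2 := h1.mul (hexp t)
    refine h2.congr_deriv ?_
    have e1 : t ^ (-(1:ℝ)/2 - 1) = t ^ (-(3:ℝ)/2) := by norm_num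
    have e2 : t ^ ((1:ℝ)/2 - 1) = t ^ (-(1:ℝ)/2) := by norm_num
    rw [e1, e2]
    ring
  have hcont : ContinuousWithinAt F (Set.Ici 0) 0 := by
    have hF0 : F 0 = 0 := by
      simp [hF, Real.zero_rpow (by norm_num : (-(1:ℝ)/2) ≠ 0)]
    rw [ContinuousWithinAt, hF0]
    apply squeeze_zero_norm' (a := fun t => 2 * a * t ^ ((1:ℝ)/2))
    · refine eventually_nhdsWithin_of_forall (fun t ht => ?_)
      rcases eq_or_lt_of_le (Set.mem_Ici.mp ht : (0:ℝ) ≤ t) with h | h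
      · subst h
        simp [hF, Real.zero_rpow (by norm_num : (-(1:ℝ)/2) ≠ 0),
          Real.zero_rpow (by norm_num : ((1:ℝ)/2) ≠ 0)]
      · have hb : 0 ≤ 1 - Real.exp (-(a * t)) := by
          simp only [sub_nonneg, Real.exp_le_one_iff, Left.neg_nonpos_iff]
          positivity
        have hb2 : 1 - Real.exp (-(a * t)) ≤ a * t := by
          nlinarith [Real.add_one_le_exp (-(a*t))]
        have hrp : (0:ℝ) ≤ t ^ (-(1:ℝ)/2) := Real.rpow_nonneg h.le _
        show |(-2 * t ^ (-(1:ℝ)/2) * (1 - Real.exp (-(a * t))))| ≤ 2 * a * t ^ ((1:ℝ)/2)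
        rw [show -2 * t ^ (-(1:ℝ)/2) * (1 - Real.exp (-(a * t)))
          = -(2 * (t ^ (-(1:ℝ)/2) * (1 - Real.exp (-(a * t))))) by ring, abs_neg,
          abs_of_nonneg (by positivity)]
        have : t ^ (-(1:ℝ)/2) * (1 - Real.exp (-(a * t))) ≤ t ^ (-(1:ℝ)/2) * (a * t) :=
          mul_le_mul_of_nonneg_left hb2 hrp
        calc 2 * (t ^ (-(1:ℝ)/2) * (1 - Real.exp (-(a * t))))
            ≤ 2 * (t ^ (-(1:ℝ)/2) * (a * t)) := by linarith
          _ = 2 * a * (t ^ (-(1:ℝ)/2) * t ^ (1:ℝ)) := by rw [Real.rpow_one]; ring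
          _ = 2 * a * t ^ ((1:ℝ)/2) := by rw [← Real.rpow_add h]; norm_num
    · have : ContinuousAt (fun t : ℝ => t ^ ((1:ℝ)/2)) 0 :=
        Real.continuousAt_rpow_const 0 _ (Or.inr (by norm_num))
      have h0 : (0:ℝ) ^ ((1:ℝ)/2) = 0 := Real.zero_rpow (by norm_num)
      have := ((this.tendsto.mono_left (nhdsWithin_le_nhds (s := Set.Ici 0))).const_mul (2*a) :
        Tendsto (fun t : ℝ => 2 * a * t ^ ((1:ℝ)/2)) (nhdsWithin 0 (Set.Ici 0)) _)
      rw [h0, mul_zero] at this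
      exact this
  have htop : Tendsto F atTop (𝓝 0) := by
    have h1 : Tendsto (fun t : ℝ => -2 * t ^ (-(1:ℝ)/2)) atTop (𝓝 0) := by
      have := (tendsto_rpow_neg_atTop (by norm_num : (0:ℝ) < 1/2)).const_mul (-2)
      rw [mul_zero] at this
      simpa [neg_div] using this
    have h2 : Tendsto (fun t : ℝ => 1 - Real.exp (-(a * t))) atTop (𝓝 1) := by
      have hm : Tendsto (fun t : ℝ => -(a * t)) atTop atBot :=
        tendsto_neg_atTop_atBot.comp (tendsto_id.const_mul_atTop ha)
      have := (Real.tendsto_exp_atBot.comp hm).const_sub 1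
      simpa using this
    have := h1.mul h2
    rw [zero_mul] at this
    exact this
  have hint : IntegrableOn (fun t : ℝ =>
      t ^ (-(3:ℝ)/2) * (1 - Real.exp (-(a * t)))
        - 2 * a * (t ^ ((1:ℝ)/2 - 1) * Real.exp (-(a * t)))) (Set.Ioi 0) :=
    (integrableOn_g ha).sub (((integrableOn_rpow_exp (by norm_num) ha)).const_mul (2*a))
  have key := MeasureTheory.integral_Ioi_of_hasDerivAt_of_tendsto hcont hderiv hint htop
  have hF0 : F 0 = 0 := by
    simp [hF, Real.zero_rpow (by norm_num : (-(1:ℝ)/2) ≠ 0)]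
  rw [hF0, sub_zero] at key
  have hsplit := MeasureTheory.integral_sub (integrableOn_g ha)
    (((integrableOn_rpow_exp (by norm_num : (0:ℝ) < 1/2) ha)).const_mul (2*a))
  rw [key] at hsplit
  have hgam : ∫ t in Set.Ioi (0:ℝ), t ^ ((1:ℝ)/2 - 1) * Real.exp (-(a * t))
      = (1/a) ^ ((1:ℝ)/2) * Real.Gamma (1/2) :=
    Real.integral_rpow_mul_exp_neg_mul_Ioi (by norm_num) ha
  have hI2 : ∫ t in Set.Ioi (0:ℝ), 2 * a * (t ^ ((1:ℝ)/2 - 1) * Real.exp (-(a * t)))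
      = 2 * a * ((1/a) ^ ((1:ℝ)/2) * Real.Gamma (1/2)) := by
    rw [MeasureTheory.integral_const_mul, hgam]
  have hsq : (1/a : ℝ) ^ ((1:ℝ)/2) = 1 / Real.sqrt a := by
    rw [← Real.sqrt_eq_rpow, one_div, Real.sqrt_inv, one_div]
  have hga : Real.Gamma (1/2 : ℝ) = Real.sqrt π := Real.Gamma_one_half_eq
  have hsa : Real.sqrt a * Real.sqrt a = a := Real.mul_self_sqrt ha.le
  have hsa0 : Real.sqrt a ≠ 0 := by positivity
  rw [hI2, hsq, hga] at hsplit
  field_simp at hsplit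
  apply mul_right_cancel₀ hsa0
  nlinarith [hsplit, hsa, Real.sqrt_nonneg a, Real.sqrt_nonneg π]

-- L5: closed form of incomplete gamma at integers
lemma gclosed (n : ℕ) (z : ℝ) :
    (∫ u in (0:ℝ)..z, u ^ n * Real.exp (-u))
      = (n.factorial : ℝ) * (1 - Real.exp (-z) * ∑ k ∈ Finset.range (n+1), z ^ k / (k.factorial : ℝ)) := by
  set F : ℝ → ℝ := fun z => (n.factorial : ℝ) *
    (1 - Real.exp (-z) * ∑ k ∈ Finset.range (n+1), z ^ k / (k.factorial : ℝ)) with hFdef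
  have hderiv : ∀ t : ℝ, HasDerivAt F (t ^ n * Real.exp (-t)) t := by
    intro t
    have hP : HasDerivAt (fun z : ℝ => ∑ k ∈ Finset.range (n+1), z ^ k / (k.factorial : ℝ))
        (∑ k ∈ Finset.range n, t ^ k / (k.factorial : ℝ)) t := by
      have h1 : HasDerivAt (fun z : ℝ => ∑ k ∈ Finset.range (n+1), z ^ k / (k.factorial : ℝ))
          (∑ k ∈ Finset.range (n+1), (k : ℝ) * t ^ (k-1) / (k.factorial : ℝ)) t := by
        apply HasDerivAt.fun_sum
        intro k _
        exact (hasDerivAt_pow k t).div_const _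
      convert h1 using 1
      rw [Finset.sum_range_succ' (fun k => (k : ℝ) * t ^ (k-1) / (k.factorial : ℝ)) n]
      simp only [Nat.cast_zero, zero_mul, Nat.factorial_zero, Nat.cast_one, zero_div, add_zero]
      apply Finset.sum_congr rfl
      intro k _
      rw [Nat.factorial_succ]
      push_cast
      have : (k:ℝ) + 1 ≠ 0 := by positivity
      field_simp
    have hE : HasDerivAt (fun z : ℝ => Real.exp (-z)) (-Real.exp (-t)) t := by
      have h1 : HasDerivAt (fun z : ℝ => -z) (-1 : ℝ) t := by exact hasDerivAt_neg t
      exact ((Real.hasDerivAt_exp (-t)).comp t h1).congr_deriv (by ring)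
    have hEP := hE.mul hP
    have := (hEP.const_sub 1).const_mul ((n.factorial : ℝ))
    refine this.congr_deriv (Eq.symm ?_)
    rw [Finset.sum_range_succ]
    have hfac : (n.factorial : ℝ) ≠ 0 := by positivity
    field_simp
    ring
  have hInt : IntervalIntegrable (fun u : ℝ => u ^ n * Real.exp (-u)) volume 0 z :=
    (Continuous.intervalIntegrable (by continuity) 0 z)
  have := intervalIntegral.integral_eq_sub_of_hasDerivAt
    (fun t _ => hderiv t) hInt
  rw [this]
  have hF0 : F 0 = 0 := by
    rw [hFdef]
    simp only [neg_zero, Real.exp_zero, one_mul]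
    rw [Finset.sum_range_succ' (fun k => (0:ℝ) ^ k / (k.factorial : ℝ)) n]
    simp
  rw [hF0, sub_zero]

-- L6
lemma Gamma_nat_add_half (j : ℕ) :
    Real.Gamma ((j : ℝ) + 1/2) = pochR (1/2) j * Real.sqrt π := by
  induction j with
  | zero =>
    simp only [Nat.cast_zero, zero_add, pochR, Finset.prod_range_zero, one_mul]
    exact Real.Gamma_one_half_eq
  | succ m ih =>
    have h : ((m+1 : ℕ) : ℝ) + 1/2 = ((m:ℝ) + 1/2) + 1 := by push_cast; ring
    have hp : pochR (1/2) (m+1) = pochR (1/2) m * (1/2 + (m:ℝ)) := Finset.prod_range_succ _ m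
    rw [h, Real.Gamma_add_one (by positivity), ih, hp]
    ring

-- L7
lemma pochR_neg_half_succ (j : ℕ) :
    pochR (-1/2) (j+1) = (-1/2) * pochR (1/2) j := by
  rw [pochR, Finset.prod_range_succ' (fun i => (-1/2 : ℝ) + i), pochR]
  simp only [Nat.cast_zero, add_zero]
  have hc : ∀ k ∈ Finset.range j, (-1/2 + (((k+1) : ℕ):ℝ)) = (1/2 + (k:ℝ)) :=
    fun k _ => by push_cast; ring
  rw [Finset.prod_congr rfl hc]
  ring

lemma lowerGamma_nat (n : ℕ) (z : ℝ) :
    lowerGamma ((n : ℝ) + 1) z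
      = (n.factorial : ℝ) * (1 - Real.exp (-z) * ∑ k ∈ Finset.range (n+1), z ^ k / (k.factorial : ℝ)) := by
  rw [← gclosed, lowerGamma]
  apply intervalIntegral.integral_congr
  intro u _
  show u ^ (((n:ℝ)+1)-1) * Real.exp (-u) = u ^ n * Real.exp (-u)
  rw [show ((n:ℝ)+1)-1 = ((n:ℕ):ℝ) by norm_num, Real.rpow_natCast]

theorem integral_lowerGamma_one (n : ℕ) (s x : ℝ) (hs : 0 < s) (hsx : 0 < s + x) :
    ∫ t in Set.Ioi (0 : ℝ), Real.exp (-s * t) * t ^ (-(3 : ℝ)/2) * lowerGamma (n + 1) (x * t) =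
      -2 * Real.sqrt π * (n.factorial : ℝ) *
        (Real.sqrt s - Real.sqrt (s + x) *
          ∑ k ∈ Finset.range (n + 1), pochR (-1/2) k / (k.factorial : ℝ) * (x / (x + s)) ^ k) := by
  have hpt : Set.EqOn
      (fun t : ℝ => Real.exp (-s * t) * t ^ (-(3 : ℝ)/2) * lowerGamma ((n : ℝ) + 1) (x * t))
      (fun t : ℝ => (n.factorial : ℝ) *
        ((t ^ (-(3:ℝ)/2) * (1 - Real.exp (-((s+x) * t)))
          - t ^ (-(3:ℝ)/2) * (1 - Real.exp (-(s * t))))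
        - ∑ j ∈ Finset.range n, (x ^ (j+1) / (((j+1).factorial : ℕ) : ℝ))
            * (t ^ (((j:ℝ) + 1/2) - 1) * Real.exp (-((s+x) * t)))))
      (Set.Ioi 0) := by
    intro t ht
    have ht : (0:ℝ) < t := ht
    simp only
    rw [lowerGamma_nat n (x*t)]
    rw [Finset.sum_range_succ' (fun k => (x*t) ^ k / (k.factorial : ℝ)) n]
    simp only [pow_zero, Nat.factorial_zero, Nat.cast_one, div_one]
    have hexp2 : Real.exp (-((s+x) * t)) = Real.exp (-(s * t)) * Real.exp (-(x * t)) := by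
      rw [← Real.exp_add]; ring_nf
    rw [hexp2]
    have hterm : ∀ j ∈ Finset.range n,
        (x ^ (j+1) / (((j+1).factorial : ℕ) : ℝ))
            * (t ^ (((j:ℝ) + 1/2) - 1) * (Real.exp (-(s * t)) * Real.exp (-(x * t))))
        = ((x*t) ^ (j+1) / (((j+1).factorial : ℕ) : ℝ))
            * (t ^ (-(3:ℝ)/2) * (Real.exp (-(s * t)) * Real.exp (-(x * t)))) := by
      intro j _
      have he : t ^ (((j:ℝ) + 1/2) - 1) = t ^ (j+1) * t ^ (-(3:ℝ)/2) := by
        rw [show ((j:ℝ) + 1/2) - 1 = (((j+1 : ℕ)):ℝ) + (-(3:ℝ)/2) by push_cast; ring,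
          Real.rpow_add ht, Real.rpow_natCast]
      rw [he, mul_pow]
      ring
    rw [Finset.sum_congr rfl hterm, ← Finset.sum_mul]
    rw [show -s * t = -(s * t) by ring]
    ring
  rw [MeasureTheory.setIntegral_congr_fun measurableSet_Ioi hpt]
  have hIsum : ∀ j : ℕ, IntegrableOn
      (fun t : ℝ => t ^ (((j:ℝ) + 1/2) - 1) * Real.exp (-((s+x) * t))) (Set.Ioi 0) :=
    fun j => integrableOn_rpow_exp (by positivity) hsx
  have hInt2 : IntegrableOn (fun t : ℝ => ∑ j ∈ Finset.range n,
      (x ^ (j+1) / (((j+1).factorial : ℕ) : ℝ))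
        * (t ^ (((j:ℝ) + 1/2) - 1) * Real.exp (-((s+x) * t)))) (Set.Ioi 0) :=
    MeasureTheory.integrable_finset_sum _ (fun j _ => ((hIsum j).const_mul _))
  have hG12 : IntegrableOn (fun t : ℝ => t ^ (-(3:ℝ)/2) * (1 - Real.exp (-((s+x) * t)))
      - t ^ (-(3:ℝ)/2) * (1 - Real.exp (-(s * t)))) (Set.Ioi 0) :=
    (integrableOn_g hsx).sub (integrableOn_g hs)
  rw [MeasureTheory.integral_const_mul,
    MeasureTheory.integral_sub hG12 hInt2,
    MeasureTheory.integral_sub (integrableOn_g hsx) (integrableOn_g hs),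
    MeasureTheory.integral_finset_sum _ (fun j _ => ((hIsum j).const_mul _)),
    integral_g hsx, integral_g hs]
  have hBval : ∀ j ∈ Finset.range n,
      ∫ t in Set.Ioi (0:ℝ), (x ^ (j+1) / (((j+1).factorial : ℕ) : ℝ))
          * (t ^ (((j:ℝ) + 1/2) - 1) * Real.exp (-((s+x) * t)))
      = Real.sqrt π * Real.sqrt (s+x) *
          (pochR (1/2) j / (((j+1).factorial : ℕ) : ℝ) * (x / (x+s)) ^ (j+1)) := by
    intro j _
    rw [MeasureTheory.integral_const_mul,
      Real.integral_rpow_mul_exp_neg_mul_Ioi (by positivity) hsx,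
      _root_.Gamma_nat_add_half j]
    -- key rpow algebra
    have hkey : (1/(s+x) : ℝ) ^ ((j:ℝ) + 1/2) * x ^ (j+1)
        = Real.sqrt (s+x) * (x / (x+s)) ^ (j+1) := by
      have h1 : (1/(s+x) : ℝ) ^ ((j:ℝ) + 1/2)
          = (s+x) ^ ((1:ℝ)/2) * ((s+x) ^ (j+1 : ℕ) : ℝ)⁻¹ := by
        rw [one_div, ← Real.rpow_natCast (s+x) (j+1), ← Real.rpow_neg hsx.le,
          ← Real.rpow_add hsx, Real.inv_rpow hsx.le, ← Real.rpow_neg hsx.le]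
        congr 1
        push_cast
        ring
      rw [h1, ← Real.sqrt_eq_rpow, div_pow, show x + s = s + x by ring]
      have : ((s+x) ^ (j+1) : ℝ) ≠ 0 := by positivity
      field_simp
    rw [show x ^ (j+1) / (((j+1).factorial : ℕ) : ℝ)
          * ((1/(s+x)) ^ ((j:ℝ)+1/2) * (pochR (1/2) j * Real.sqrt π))
        = ((1/(s+x)) ^ ((j:ℝ)+1/2) * x ^ (j+1)) * (pochR (1/2) j * Real.sqrt π)
            / (((j+1).factorial : ℕ) : ℝ) from by ring, hkey]
    ring
  rw [Finset.sum_congr rfl hBval, ← Finset.mul_sum]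
  rw [Finset.sum_range_succ'
    (fun k => pochR (-1/2) k / (k.factorial : ℝ) * (x / (x + s)) ^ k) n]
  rw [show pochR (-1/2) 0 = 1 from by simp [pochR]]
  simp only [Nat.factorial_zero, Nat.cast_one, pow_zero, div_one, one_mul, mul_one]
  have hRterm : ∀ j ∈ Finset.range n,
      pochR (-1/2) (j+1) / (((j+1).factorial : ℕ) : ℝ) * (x / (x + s)) ^ (j+1)
      = (-1/2 : ℝ) * (pochR (1/2) j / (((j+1).factorial : ℕ) : ℝ) * (x / (x+s)) ^ (j+1)) := by
    intro j _
    rw [pochR_neg_half_succ j]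
    ring
  rw [Finset.sum_congr rfl hRterm, ← Finset.mul_sum]
  ring
end

section
/- For real z with 0 < z < 1: ₂F₁(1/3, 2/3; 1/2; z) = cos((1/3) arcsin(√z)) / √(1-z). -/
open scoped BigOperators

/-- Gauss hypergeometric series `₂F₁(a,b;c;z)` on `ℝ`. -/
noncomputable def hyp2F1R (a b c z : ℝ) : ℝ :=
  ∑' k : ℕ, pochR a k * pochR b k / (pochR c k * (k.factorial : ℝ)) * z ^ k

namespace HypAux

noncomputable def cc (k : ℕ) : ℝ :=
  pochR (1/3) k * pochR (2/3) k / (pochR (1/2) k * (k.factorial : ℝ))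

lemma pochR_zero (a : ℝ) : pochR a 0 = 1 := by simp [pochR]

lemma pochR_succ (a : ℝ) (k : ℕ) : pochR a (k+1) = pochR a k * (a + k) :=
  Finset.prod_range_succ _ _

lemma pochR_pos {a : ℝ} (ha : 0 < a) (k : ℕ) : 0 < pochR a k :=
  Finset.prod_pos fun i _ => by positivity

lemma cc_zero : cc 0 = 1 := by simp [cc, pochR_zero]

lemma cc_pos (k : ℕ) : 0 < cc k := by
  have h1 := pochR_pos (show (0:ℝ) < 1/3 by norm_num) k
  have h2 := pochR_pos (show (0:ℝ) < 2/3 by norm_num) k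
  have h3 := pochR_pos (show (0:ℝ) < 1/2 by norm_num) k
  have h4 : (0:ℝ) < (k.factorial : ℝ) := by exact_mod_cast k.factorial_pos
  unfold cc; positivity

lemma cc_rec (k : ℕ) :
    cc (k+1) * (((k:ℝ)+1) * ((k:ℝ)+1/2)) = cc k * (((k:ℝ)+1/3) * ((k:ℝ)+2/3)) := by
  have h3 := (pochR_pos (show (0:ℝ) < 1/2 by norm_num) k).ne'
  have h4 : ((k.factorial : ℝ)) ≠ 0 := by
    exact_mod_cast k.factorial_pos.ne'
  have h5 : ((k:ℝ) + 1/2) ≠ 0 := by positivity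
  have h6 : ((k:ℝ) + 1) ≠ 0 := by positivity
  unfold cc
  rw [pochR_succ, pochR_succ, pochR_succ, Nat.factorial_succ]
  push_cast
  field_simp
  ring

lemma cc_le_one (k : ℕ) : cc k ≤ 1 := by
  induction k with
  | zero => simp [cc_zero]
  | succ k ih =>
    have hA : (0:ℝ) < ((k:ℝ)+1) * ((k:ℝ)+1/2) := by positivity
    have key : cc (k+1) * (((k:ℝ)+1) * ((k:ℝ)+1/2)) ≤ 1 * (((k:ℝ)+1) * ((k:ℝ)+1/2)) := by
      rw [cc_rec]
      have hk0 : (0:ℝ) ≤ (k:ℝ) := Nat.cast_nonneg k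
      nlinarith [cc_pos k]
    exact le_of_mul_le_mul_right (by linarith) hA

lemma summable_cube {r : ℝ} (hr : |r| < 1) :
    Summable (fun k : ℕ => ((k:ℝ)+1)^3 * r^k) := by
  have hr' : ‖r‖ < 1 := hr
  have h3 := summable_pow_mul_geometric_of_norm_lt_one (R := ℝ) 3 hr'
  have h2 := (summable_pow_mul_geometric_of_norm_lt_one (R := ℝ) 2 hr').mul_left 3
  have h1 := (summable_pow_mul_geometric_of_norm_lt_one (R := ℝ) 1 hr').mul_left 3
  have h0 := summable_pow_mul_geometric_of_norm_lt_one (R := ℝ) 0 hr'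
  refine ((h3.add h2).add (h1.add h0)).congr fun k => ?_
  push_cast
  ring

lemma summable_poly_geom (f : ℕ → ℝ) (hf : ∀ k, |f k| ≤ 4*((k:ℝ)+1)^3) {x : ℝ}
    (hx : |x| < 1) : Summable (fun k => f k * x ^ k) := by
  have h : Summable (fun k : ℕ => 4*(((k:ℝ)+1)^3 * |x|^k)) :=
    (summable_cube (by rwa [abs_abs])).mul_left 4
  refine Summable.of_norm_bounded h fun k => ?_
  rw [norm_mul, norm_pow, Real.norm_eq_abs, Real.norm_eq_abs]
  calc |f k| * |x|^k ≤ 4*((k:ℝ)+1)^3 * |x|^k :=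
        mul_le_mul_of_nonneg_right (hf k) (by positivity)
    _ = 4*(((k:ℝ)+1)^3 * |x|^k) := by ring

lemma hasDerivAt_psum (c : ℕ → ℝ) (hc : ∀ k, |c k| ≤ ((k:ℝ)+1)^2) {x : ℝ} (hx : |x| < 1) :
    HasDerivAt (fun y : ℝ => ∑' k : ℕ, c k * y ^ k)
      (∑' k : ℕ, ((k:ℝ)+1) * c (k+1) * x ^ k) x := by
  set r : ℝ := (1 + |x|) / 2 with hrdef
  have hax : 0 ≤ |x| := abs_nonneg x
  have hr0 : 0 ≤ r := by positivity
  have hxr : |x| < r := by rw [hrdef]; linarith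
  have hr1 : r < 1 := by rw [hrdef]; linarith
  have hrabs : |r| < 1 := by rwa [abs_of_nonneg hr0]
  have hcube := summable_cube hrabs
  have hbound : ∀ (k : ℕ) (y : ℝ), y ∈ Metric.ball (0:ℝ) r →
      ‖((k:ℝ)+1) * c (k+1) * y ^ k‖ ≤ 4*(((k:ℝ)+1)^3 * r^k) := by
    intro k y hy
    have hy' : |y| ≤ r := by
      have := Metric.mem_ball.mp hy
      rw [Real.dist_eq, sub_zero] at this
      linarith
    have h1 : |y|^k ≤ r^k := pow_le_pow_left₀ (abs_nonneg y) hy' k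
    have h2 := hc (k+1)
    push_cast at h2
    have hk0 : (0:ℝ) ≤ (k:ℝ) := Nat.cast_nonneg k
    have hrk : (0:ℝ) ≤ r^k := pow_nonneg hr0 k
    have habs : ‖((k:ℝ)+1) * c (k+1) * y ^ k‖ = ((k:ℝ)+1) * |c (k+1)| * |y|^k := by
      rw [norm_mul, norm_pow, Real.norm_eq_abs, Real.norm_eq_abs, abs_mul,
        abs_of_nonneg (by positivity : (0:ℝ) ≤ (k:ℝ)+1)]
    rw [habs]
    have step1 : ((k:ℝ)+1) * |c (k+1)| * |y|^k ≤ ((k:ℝ)+1) * ((k:ℝ)+1+1)^2 * r^k := by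
      have hcnn : 0 ≤ |c (k+1)| := abs_nonneg _
      have := mul_le_mul (mul_le_mul_of_nonneg_left h2 (by positivity : (0:ℝ) ≤ (k:ℝ)+1))
        h1 (by positivity) (by positivity)
      calc ((k:ℝ)+1) * |c (k+1)| * |y|^k ≤ (((k:ℝ)+1) * ((k:ℝ)+1+1)^2) * r^k := this
        _ = ((k:ℝ)+1) * ((k:ℝ)+1+1)^2 * r^k := by ring
    have step2 : ((k:ℝ)+1) * ((k:ℝ)+1+1)^2 * r^k ≤ 4*(((k:ℝ)+1)^3 * r^k) := by
      have base : ((k:ℝ)+1) * ((k:ℝ)+1+1)^2 ≤ 4*((k:ℝ)+1)^3 := by nlinarith [pow_nonneg hk0 3, pow_nonneg hk0 2, hk0]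
      nlinarith [mul_le_mul_of_nonneg_right base hrk]
    linarith
  have hg' : TendstoUniformlyOn
      (fun (n:ℕ) (y:ℝ) => ∑ k ∈ Finset.range n, ((k:ℝ)+1) * c (k+1) * y ^ k)
      (fun y => ∑' k : ℕ, ((k:ℝ)+1) * c (k+1) * y ^ k) Filter.atTop (Metric.ball (0:ℝ) r) :=
    tendstoUniformlyOn_tsum_nat (hcube.mul_left 4) hbound
  have hF : ∀ (n : ℕ), ∀ (y : ℝ), y ∈ Metric.ball (0:ℝ) r →
      HasDerivAt (fun z : ℝ => ∑ k ∈ Finset.range (n+1), c k * z ^ k)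
        (∑ k ∈ Finset.range n, ((k:ℝ)+1) * c (k+1) * y ^ k) y := by
    intro n y _
    have h : HasDerivAt (fun z : ℝ => ∑ k ∈ Finset.range (n+1), c k * z ^ k)
        (∑ k ∈ Finset.range (n+1), c k * ((k:ℝ) * y ^ (k-1))) y := by
      apply HasDerivAt.fun_sum
      intro k _
      exact (hasDerivAt_pow k y).const_mul (c k)
    convert h using 1
    rw [Finset.sum_range_succ']
    simp only [Nat.cast_zero, zero_mul, mul_zero, add_zero]
    refine Finset.sum_congr rfl fun k _ => ?_
    push_cast
    ring_nf
  have hp : ∀ (y : ℝ), y ∈ Metric.ball (0:ℝ) r →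
      Filter.Tendsto (fun n : ℕ => ∑ k ∈ Finset.range (n+1), c k * y ^ k) Filter.atTop
        (nhds (∑' k : ℕ, c k * y ^ k)) := by
    intro y hy
    have hy1 : |y| < 1 := by
      have := Metric.mem_ball.mp hy
      rw [Real.dist_eq, sub_zero] at this
      linarith
    have hs : Summable fun k : ℕ => c k * y ^ k := by
      refine summable_poly_geom c (fun k => le_trans (hc k) ?_) hy1
      have hk0 : (0:ℝ) ≤ (k:ℝ) := Nat.cast_nonneg k
      nlinarith
    exact hs.hasSum.tendsto_sum_nat.comp (Filter.tendsto_add_atTop_nat 1)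
  have hxball : x ∈ Metric.ball (0:ℝ) r := by
    rw [Metric.mem_ball, Real.dist_eq, sub_zero]
    exact hxr
  exact hasDerivAt_of_tendstoUniformlyOn Metric.isOpen_ball hg'
    (Filter.Eventually.of_forall hF) hp hxball

noncomputable def Uf (x : ℝ) : ℝ := ∑' k : ℕ, cc k * x ^ k
noncomputable def Vf (x : ℝ) : ℝ := ∑' k : ℕ, (((k:ℝ)+1) * cc (k+1)) * x ^ k
noncomputable def Wf (x : ℝ) : ℝ := ∑' k : ℕ, ((((k:ℝ)+2) * ((k:ℝ)+1)) * cc (k+2)) * x ^ k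


lemma le_cube (k : ℕ) {u : ℝ} (h : u ≤ ((k:ℝ)+2)*((k:ℝ)+1)) : u ≤ 4*((k:ℝ)+1)^3 := by
  have hk0 : (0:ℝ) ≤ (k:ℝ) := Nat.cast_nonneg k
  nlinarith [pow_nonneg hk0 3, pow_nonneg hk0 2, hk0]

lemma abs_cc_le (k : ℕ) : |cc k| ≤ 1 := by
  rw [abs_of_pos (cc_pos k)]; exact cc_le_one k

lemma hasDerivAt_Uf {x : ℝ} (hx : |x| < 1) : HasDerivAt Uf (Vf x) x := by
  have h := hasDerivAt_psum cc (fun k => by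
    have := abs_cc_le k
    have hk0 : (0:ℝ) ≤ (k:ℝ) := Nat.cast_nonneg k
    nlinarith) hx
  have e : Vf x = ∑' k : ℕ, ((k:ℝ)+1) * cc (k+1) * x ^ k := rfl
  rw [e]
  exact h

lemma hasDerivAt_Vf {x : ℝ} (hx : |x| < 1) : HasDerivAt Vf (Wf x) x := by
  have h := hasDerivAt_psum (fun k => ((k:ℝ)+1) * cc (k+1)) (fun k => by
    have := abs_cc_le (k+1)
    have hk0 : (0:ℝ) ≤ (k:ℝ) := Nat.cast_nonneg k
    have hp : (0:ℝ) < cc (k+1) := cc_pos (k+1)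
    rw [abs_mul, abs_of_nonneg (by positivity : (0:ℝ) ≤ (k:ℝ)+1)]
    nlinarith) hx
  have e : Wf x = ∑' k : ℕ, ((k:ℝ)+1) * ((((k+1:ℕ):ℝ)+1) * cc (k+1+1)) * x ^ k := by
    unfold Wf
    refine tsum_congr fun k => ?_
    push_cast
    ring
  rw [show HasDerivAt Vf (Wf x) x ↔
      HasDerivAt (fun y : ℝ => ∑' k : ℕ, (((k:ℝ)+1) * cc (k+1)) * y ^ k) (Wf x) x from Iff.rfl, e]
  exact h

lemma ode {x : ℝ} (hx : |x| < 1) :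
    x*(1-x)*Wf x + (1/2 - 2*x)*Vf x - (2/9)*Uf x = 0 := by
  have hk0 : ∀ k : ℕ, (0:ℝ) ≤ (k:ℝ) := fun k => Nat.cast_nonneg k
  have hccb : ∀ k, (0:ℝ) < cc k := cc_pos
  -- summability of all needed series
  have sU : Summable (fun k : ℕ => cc k * x ^ k) :=
    summable_poly_geom cc (fun k => by
      have h1 := abs_cc_le k; have h2 := hk0 k
      exact le_cube k (by nlinarith [sq_nonneg ((k:ℝ))])) hx
  have sV : Summable (fun k : ℕ => (((k:ℝ)+1) * cc (k+1)) * x ^ k) :=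
    summable_poly_geom _ (fun k => by
      have h1 := abs_cc_le (k+1); have h2 := hk0 k
      rw [abs_mul, abs_of_nonneg (by positivity : (0:ℝ) ≤ (k:ℝ)+1)]
      exact le_cube k (by nlinarith [abs_nonneg (cc (k+1)), sq_nonneg ((k:ℝ))])) hx
  have sW : Summable (fun k : ℕ => ((((k:ℝ)+2) * ((k:ℝ)+1)) * cc (k+2)) * x ^ k) :=
    summable_poly_geom _ (fun k => by
      have h1 := abs_cc_le (k+2); have h2 := hk0 k
      rw [abs_mul, abs_of_nonneg (by positivity : (0:ℝ) ≤ ((k:ℝ)+2) * ((k:ℝ)+1))]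
      exact le_cube k (by nlinarith [abs_nonneg (cc (k+2)), sq_nonneg ((k:ℝ))])) hx
  have sA : Summable (fun k : ℕ => ((k:ℝ)*((k:ℝ)+1)*cc (k+1)) * x ^ k) :=
    summable_poly_geom _ (fun k => by
      have h1 := abs_cc_le (k+1); have h2 := hk0 k
      rw [abs_mul, abs_of_nonneg (by positivity : (0:ℝ) ≤ (k:ℝ) * ((k:ℝ)+1))]
      exact le_cube k (by nlinarith [abs_nonneg (cc (k+1)), sq_nonneg ((k:ℝ))])) hx
  have sB : Summable (fun k : ℕ => (((k:ℝ)-1)*(k:ℝ)*cc k) * x ^ k) :=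
    summable_poly_geom _ (fun k => by
      have h1 := abs_cc_le k; have h2 := hk0 k; have h3 := (hccb k).le
      have habs : |(k:ℝ)-1| ≤ (k:ℝ)+1 := by
        rw [abs_le]; constructor <;> linarith
      rw [abs_mul, abs_mul, abs_of_nonneg h2]
      have : |(k:ℝ)-1| * (k:ℝ) * |cc k| ≤ ((k:ℝ)+1) * (k:ℝ) * 1 := by
        apply mul_le_mul (mul_le_mul habs le_rfl h2 (by linarith)) h1 (abs_nonneg _)
        positivity
      exact le_cube k (by nlinarith [sq_nonneg ((k:ℝ))])) hx
  have sC : Summable (fun k : ℕ => ((k:ℝ)*cc k) * x ^ k) :=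
    summable_poly_geom _ (fun k => by
      have h1 := abs_cc_le k; have h2 := hk0 k
      rw [abs_mul, abs_of_nonneg (by positivity : (0:ℝ) ≤ (k:ℝ))]
      exact le_cube k (by nlinarith [abs_nonneg (cc k), sq_nonneg ((k:ℝ))])) hx
  -- HasSum facts
  have hU : HasSum (fun k : ℕ => cc k * x ^ k) (Uf x) := sU.hasSum
  have hV : HasSum (fun k : ℕ => (((k:ℝ)+1) * cc (k+1)) * x ^ k) (Vf x) := sV.hasSum
  have hW : HasSum (fun k : ℕ => ((((k:ℝ)+2) * ((k:ℝ)+1)) * cc (k+2)) * x ^ k) (Wf x) := sW.hasSum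
  -- shifted sums
  have hA : HasSum (fun k : ℕ => ((k:ℝ)*((k:ℝ)+1)*cc (k+1)) * x ^ k) (x * Wf x) := by
    have h1 : HasSum (fun k : ℕ =>
        ((((k+1:ℕ)):ℝ)*((((k+1:ℕ)):ℝ)+1)*cc ((k+1)+1)) * x ^ (k+1)) (x * Wf x) := by
      have h := hW.mul_left x
      have e : (fun k : ℕ => x * (((((k:ℝ)+2) * ((k:ℝ)+1)) * cc (k+2)) * x ^ k))
          = fun k : ℕ => ((((k+1:ℕ)):ℝ)*((((k+1:ℕ)):ℝ)+1)*cc ((k+1)+1)) * x ^ (k+1) := by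
        funext k; push_cast; ring
      rwa [e] at h
    have h2 := (hasSum_nat_add_iff
      (f := fun k : ℕ => ((k:ℝ)*((k:ℝ)+1)*cc (k+1)) * x ^ k) 1).mp h1
    simpa using h2
  have hB : HasSum (fun k : ℕ => (((k:ℝ)-1)*(k:ℝ)*cc k) * x ^ k) (x * (x * Wf x)) := by
    have h1 : HasSum (fun k : ℕ =>
        (((((k+1:ℕ)):ℝ)-1)*(((k+1:ℕ)):ℝ)*cc (k+1)) * x ^ (k+1)) (x * (x * Wf x)) := by
      have h := hA.mul_left x
      have e : (fun k : ℕ => x * (((k:ℝ)*((k:ℝ)+1)*cc (k+1)) * x ^ k))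
          = fun k : ℕ => (((((k+1:ℕ)):ℝ)-1)*(((k+1:ℕ)):ℝ)*cc (k+1)) * x ^ (k+1) := by
        funext k; push_cast; ring
      rwa [e] at h
    have h2 := (hasSum_nat_add_iff
      (f := fun k : ℕ => (((k:ℝ)-1)*(k:ℝ)*cc k) * x ^ k) 1).mp h1
    simpa using h2
  have hC : HasSum (fun k : ℕ => ((k:ℝ)*cc k) * x ^ k) (x * Vf x) := by
    have h1 : HasSum (fun k : ℕ =>
        ((((k+1:ℕ)):ℝ)*cc (k+1)) * x ^ (k+1)) (x * Vf x) := by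
      have h := hV.mul_left x
      have e : (fun k : ℕ => x * ((((k:ℝ)+1) * cc (k+1)) * x ^ k))
          = fun k : ℕ => ((((k+1:ℕ)):ℝ)*cc (k+1)) * x ^ (k+1) := by
        funext k; push_cast; ring
      rwa [e] at h
    have h2 := (hasSum_nat_add_iff
      (f := fun k : ℕ => ((k:ℝ)*cc k) * x ^ k) 1).mp h1
    simpa using h2
  -- combine
  have hcomb := ((hA.sub hB).add ((hV.mul_left (1/2)).sub (hC.mul_left 2))).sub
    (hU.mul_left (2/9))
  have hfun : (fun k : ℕ =>
      (((k:ℝ)*((k:ℝ)+1)*cc (k+1)) * x ^ k - (((k:ℝ)-1)*(k:ℝ)*cc k) * x ^ k +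
        (1/2 * ((((k:ℝ)+1) * cc (k+1)) * x ^ k) - 2 * (((k:ℝ)*cc k) * x ^ k)) -
        2/9 * (cc k * x ^ k))) = fun _ : ℕ => (0:ℝ) := by
    funext k
    have h := cc_rec k
    linear_combination (x ^ k) * h
  rw [hfun] at hcomb
  have hz := hcomb.unique hasSum_zero
  linear_combination hz

lemma Uf_zero : Uf 0 = 1 := by
  unfold Uf
  rw [tsum_eq_single 0 (fun b hb => by simp [zero_pow hb])]
  simp [cc_zero]

lemma sin_sq_lt_one {θ : ℝ} (h1 : -(Real.pi/2) < θ) (h2 : θ < Real.pi/2) :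
    |Real.sin θ ^ 2| < 1 := by
  have hc : 0 < Real.cos θ := Real.cos_pos_of_mem_Ioo ⟨h1, h2⟩
  have hp := Real.sin_sq_add_cos_sq θ
  rw [abs_of_nonneg (sq_nonneg _)]
  nlinarith

noncomputable def phiF (θ : ℝ) : ℝ := Uf (Real.sin θ ^ 2) * Real.cos θ

noncomputable def phiF' (θ : ℝ) : ℝ :=
  Vf (Real.sin θ ^ 2) * (2 * Real.sin θ * Real.cos θ) * Real.cos θ
    - Uf (Real.sin θ ^ 2) * Real.sin θ

lemma hasDerivAt_sinsq (θ : ℝ) :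
    HasDerivAt (fun t : ℝ => Real.sin t ^ 2) (2 * Real.sin θ * Real.cos θ) θ := by
  have h := (Real.hasDerivAt_sin θ).fun_pow 2
  simpa using h

lemma hasDerivAt_phiF {θ : ℝ} (h1 : -(Real.pi/2) < θ) (h2 : θ < Real.pi/2) :
    HasDerivAt phiF (phiF' θ) θ := by
  have hz := sin_sq_lt_one h1 h2
  have hu : HasDerivAt (fun t => Uf (Real.sin t ^ 2))
      (Vf (Real.sin θ ^ 2) * (2 * Real.sin θ * Real.cos θ)) θ := by
    have := (hasDerivAt_Uf hz).comp θ (hasDerivAt_sinsq θ); exact this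
  have h := hu.fun_mul (Real.hasDerivAt_cos θ)
  refine h.congr_deriv ?_
  unfold phiF'
  ring

lemma hasDerivAt_phiF' {θ : ℝ} (h1 : -(Real.pi/2) < θ) (h2 : θ < Real.pi/2) :
    HasDerivAt phiF' (-(1/9) * phiF θ) θ := by
  have hz := sin_sq_lt_one h1 h2
  have hv : HasDerivAt (fun t => Vf (Real.sin t ^ 2))
      (Wf (Real.sin θ ^ 2) * (2 * Real.sin θ * Real.cos θ)) θ := by
    have := (hasDerivAt_Vf hz).comp θ (hasDerivAt_sinsq θ); exact this
  have hu : HasDerivAt (fun t => Uf (Real.sin t ^ 2))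
      (Vf (Real.sin θ ^ 2) * (2 * Real.sin θ * Real.cos θ)) θ := by
    have := (hasDerivAt_Uf hz).comp θ (hasDerivAt_sinsq θ); exact this
  have h2sc : HasDerivAt (fun t => 2 * Real.sin t * Real.cos t)
      (2 * Real.cos θ * Real.cos θ + 2 * Real.sin θ * (-Real.sin θ)) θ := by
    have hs : HasDerivAt (fun t => 2 * Real.sin t) (2 * Real.cos θ) θ :=
      (Real.hasDerivAt_sin θ).const_mul 2
    exact hs.mul (Real.hasDerivAt_cos θ)
  have hbig := ((hv.fun_mul h2sc).fun_mul (Real.hasDerivAt_cos θ)).fun_sub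
    (hu.fun_mul (Real.hasDerivAt_sin θ))
  refine hbig.congr_deriv ?_
  symm
  have hode := ode hz
  have hpy : Real.sin θ ^ 2 + Real.cos θ ^ 2 = 1 := Real.sin_sq_add_cos_sq θ
  unfold phiF
  linear_combination (-4*Real.cos θ) * hode +
    (-4*Real.sin θ^2*Real.cos θ*Wf (Real.sin θ^2) - 2*Real.cos θ*Vf (Real.sin θ^2)) * hpy

lemma phiF_zero : phiF 0 = 1 := by simp [phiF, Uf_zero]

lemma phiF'_zero : phiF' 0 = 0 := by simp [phiF']

noncomputable def energy (t : ℝ) : ℝ :=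
  9*(phiF' t + (1/3)*Real.sin ((1/3)*t))^2 + (phiF t - Real.cos ((1/3)*t))^2

lemma hasDerivAt_energy {t : ℝ} (h1 : -(Real.pi/2) < t) (h2 : t < Real.pi/2) :
    HasDerivAt energy 0 t := by
  have hlin : HasDerivAt (fun u : ℝ => (1/3)*u) (1/3) t := by
    have h := (hasDerivAt_id t).const_mul (1/3 : ℝ)
    rwa [mul_one] at h
  have hA : HasDerivAt (fun u => phiF' u + (1/3)*Real.sin ((1/3)*u))
      (-(1/9) * (phiF t - Real.cos ((1/3)*t))) t := by
    have hs : HasDerivAt (fun u : ℝ => Real.sin ((1/3)*u)) (Real.cos ((1/3)*t) * (1/3)) t :=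
      (Real.hasDerivAt_sin ((1/3)*t)).comp t hlin
    have h := (hasDerivAt_phiF' h1 h2).fun_add (hs.const_mul (1/3))
    refine h.congr_deriv ?_
    ring
  have hB : HasDerivAt (fun u => phiF u - Real.cos ((1/3)*u))
      (phiF' t + (1/3)*Real.sin ((1/3)*t)) t := by
    have hc : HasDerivAt (fun u : ℝ => Real.cos ((1/3)*u)) (-Real.sin ((1/3)*t) * (1/3)) t :=
      (Real.hasDerivAt_cos ((1/3)*t)).comp t hlin
    have h := (hasDerivAt_phiF h1 h2).fun_sub hc
    refine h.congr_deriv ?_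
    ring
  have h := ((hA.fun_pow 2).const_mul 9).fun_add (hB.fun_pow 2)
  refine h.congr_deriv ?_
  ring

lemma phiF_eq {θ : ℝ} (h0 : 0 ≤ θ) (hl : θ < Real.pi/2) :
    phiF θ = Real.cos ((1/3)*θ) := by
  have hpi : 0 < Real.pi/2 := by positivity
  have hmem : ∀ x ∈ Set.Icc 0 θ, -(Real.pi/2) < x ∧ x < Real.pi/2 := by
    intro x hx
    exact ⟨by linarith [hx.1], by linarith [hx.2]⟩
  have hcont : ContinuousOn energy (Set.Icc 0 θ) := fun x hx =>
    ((hasDerivAt_energy (hmem x hx).1 (hmem x hx).2).continuousAt).continuousWithinAt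
  have hderiv : ∀ x ∈ Set.Ico 0 θ, HasDerivWithinAt energy 0 (Set.Ici x) x := by
    intro x hx
    have hx' : x ∈ Set.Icc 0 θ := ⟨hx.1, hx.2.le⟩
    exact (hasDerivAt_energy (hmem x hx').1 (hmem x hx').2).hasDerivWithinAt
  have hconst := constant_of_has_deriv_right_zero hcont hderiv θ ⟨h0, le_refl θ⟩
  have hE0 : energy 0 = 0 := by
    simp [energy, phiF_zero, phiF'_zero]
  rw [hE0] at hconst
  have h1 : (0:ℝ) ≤ 9*(phiF' θ + (1/3)*Real.sin ((1/3)*θ))^2 := by positivity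
  have h2 : (0:ℝ) ≤ (phiF θ - Real.cos ((1/3)*θ))^2 := sq_nonneg _
  have : (phiF θ - Real.cos ((1/3)*θ))^2 = 0 := by
    unfold energy at hconst
    nlinarith
  have := pow_eq_zero_iff (n := 2) (by norm_num) |>.mp this
  linarith

end HypAux

open HypAux in
theorem hyp2F1_third_twothirds_half (z : ℝ) (hz0 : 0 < z) (hz1 : z < 1) :
    hyp2F1R (1/3) (2/3) (1/2) z =
      Real.cos ((1/3) * Real.arcsin (Real.sqrt z)) / Real.sqrt (1 - z) := by
  set θ := Real.arcsin (Real.sqrt z) with hθdef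
  have hs0 : 0 ≤ Real.sqrt z := Real.sqrt_nonneg z
  have hslt : Real.sqrt z < 1 := by
    rw [show (1:ℝ) = Real.sqrt 1 by simp]
    exact Real.sqrt_lt_sqrt hz0.le hz1
  have hs1 : Real.sqrt z ≤ 1 := hslt.le
  have hθ0 : 0 ≤ θ := Real.arcsin_nonneg.mpr hs0
  have hθlt : θ < Real.pi/2 := by
    rw [hθdef, Real.arcsin_lt_pi_div_two]
    exact hslt
  have hsin : Real.sin θ = Real.sqrt z := Real.sin_arcsin (by linarith) hs1
  have hz' : Real.sin θ ^ 2 = z := by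
    rw [hsin, Real.sq_sqrt hz0.le]
  have hcos : Real.cos θ = Real.sqrt (1 - z) := by
    rw [hθdef, Real.cos_arcsin, Real.sq_sqrt hz0.le]
  have h := phiF_eq hθ0 hθlt
  unfold phiF at h
  rw [hz', hcos] at h
  have hne : Real.sqrt (1 - z) ≠ 0 := by
    have : 0 < Real.sqrt (1 - z) := Real.sqrt_pos.mpr (by linarith)
    exact this.ne'
  have hU : hyp2F1R (1/3) (2/3) (1/2) z = Uf z := rfl
  rw [hU, eq_div_iff hne]
  exact h
end
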